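/- arXiv:2208.04177 — 4 statements merged into one kernel-verified Lean document; each statement's English description precedes it below -/
import Mathlib

section
/- Let μ be a Borel probability measure on ℝⁿ and define the half-space depth φ_μ(x) = inf{μ(H) : H is a closed half-space containing x} and the Cramér transform Λ*_μ(x) = sup_{ξ∈ℝⁿ} (⟨x,ξ⟩ − log ∫ e^{⟨ξ,z⟩} dμ(z)). Then for every x ∈ ℝⁿ, φ_μ(x) ≤ exp(−Λ*_μ(x)). -/
open MeasureTheory Real
open scoped RealInnerProductSpace ENNReal

/-- The logarithmic Laplace transform of a measure on `ℝⁿ`, with values in `EReal`. -/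
noncomputable def logLaplace {n : ℕ} (μ : Measure (EuclideanSpace ℝ (Fin n)))
    (ξ : EuclideanSpace ℝ (Fin n)) : EReal :=
  ENNReal.log (∫⁻ z, ENNReal.ofReal (Real.exp ⟪ξ, z⟫) ∂μ)

/-- The Cramér transform of a measure on `ℝⁿ`. -/
noncomputable def cramer {n : ℕ} (μ : Measure (EuclideanSpace ℝ (Fin n)))
    (x : EuclideanSpace ℝ (Fin n)) : EReal :=
  ⨆ ξ : EuclideanSpace ℝ (Fin n), ((⟪x, ξ⟫ : ℝ) : EReal) - logLaplace μ ξ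

/-- Tukey's half-space depth: the infimum of the measure of closed half-spaces containing `x`. -/
noncomputable def depth {n : ℕ} (μ : Measure (EuclideanSpace ℝ (Fin n)))
    (x : EuclideanSpace ℝ (Fin n)) : ℝ≥0∞ :=
  ⨅ (ξ : EuclideanSpace ℝ (Fin n)) (c : ℝ) (_ : c ≤ ⟪ξ, x⟫),
    μ {z | c ≤ ⟪ξ, z⟫}

theorem stmt0 (n : ℕ) (μ : Measure (EuclideanSpace ℝ (Fin n))) [IsProbabilityMeasure μ]
    (x : EuclideanSpace ℝ (Fin n)) :
    depth μ x ≤ EReal.exp (-(cramer μ x)) := by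
  rw [← ENNReal.exp_log (depth μ x), EReal.exp_le_exp_iff]
  refine EReal.le_neg_of_le_neg (iSup_le fun ξ ↦ ?_)
  -- notation
  set a : ℝ := ⟪ξ, x⟫ with ha
  have hax : ⟪x, ξ⟫ = a := real_inner_comm ξ x
  set m : ℝ≥0∞ := μ {z | a ≤ ⟪ξ, z⟫} with hm
  have hdm : depth μ x ≤ m := by
    refine iInf_le_of_le ξ (iInf_le_of_le a (iInf_le_of_le le_rfl le_rfl))
  rcases eq_or_ne m 0 with h0 | h0
  · -- then -log (depth μ x) = ⊤ since depth ≤ m = 0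
    have : depth μ x = 0 := le_antisymm (h0 ▸ hdm) bot_le
    simp [this]
  -- Chernoff / Markov
  have hmeas : AEMeasurable (fun z ↦ ENNReal.ofReal (Real.exp ⟪ξ, z⟫)) μ := by
    refine (ENNReal.continuous_ofReal.comp (Real.continuous_exp.comp ?_)).aemeasurable
    exact continuous_const.inner continuous_id
  have hset : {z : EuclideanSpace ℝ (Fin n) |
      ENNReal.ofReal (Real.exp a) ≤ ENNReal.ofReal (Real.exp ⟪ξ, z⟫)} = {z | a ≤ ⟪ξ, z⟫} := by
    ext z
    simp [ENNReal.ofReal_le_ofReal_iff (Real.exp_nonneg _), Real.exp_le_exp]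
  have hmarkov : ENNReal.ofReal (Real.exp a) * m ≤
      ∫⁻ z, ENNReal.ofReal (Real.exp ⟪ξ, z⟫) ∂μ := by
    have := mul_meas_ge_le_lintegral₀ hmeas (ENNReal.ofReal (Real.exp a))
    rwa [hset] at this
  -- take logs
  have hlog : (a : EReal) + ENNReal.log m ≤ logLaplace μ ξ := by
    have := ENNReal.log_monotone hmarkov
    rwa [ENNReal.log_mul_add, show ENNReal.ofReal (Real.exp a) = EReal.exp (a : EReal) from rfl,
      EReal.log_exp] at this
  -- m is a finite positive measure value
  have hm1 : m ≤ 1 := prob_le_one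
  have hmbot : ENNReal.log m ≠ ⊥ := by simpa using h0
  have hmtop : ENNReal.log m ≠ ⊤ := by
    simp only [ne_eq, ENNReal.log_eq_top_iff]
    exact fun h ↦ by simp [h] at hm1
  have key : (a : EReal) - logLaplace μ ξ ≤ -ENNReal.log m := by
    obtain ⟨r, hr⟩ : ∃ r : ℝ, ENNReal.log m = (r : EReal) := by
      lift ENNReal.log m to ℝ using ⟨hmtop, hmbot⟩ with r
      exact ⟨r, rfl⟩
    rw [hr] at hlog ⊢
    have hΛbot : logLaplace μ ξ ≠ ⊥ := by
      refine ne_bot_of_le_ne_bot ?_ hlog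
      rw [← EReal.coe_add]
      exact EReal.coe_ne_bot _
    rcases eq_or_ne (logLaplace μ ξ) ⊤ with hT | hT
    · rw [hT, EReal.sub_top]
      exact bot_le
    · rw [EReal.sub_le_iff_le_add (Or.inl hΛbot) (Or.inl hT)]
      have h1 : (-(r : EReal)) + ((a : EReal) + (r : EReal)) = (a : EReal) := by
        rw [← EReal.coe_neg, ← EReal.coe_add, ← EReal.coe_add, EReal.coe_eq_coe_iff]
        ring
      calc (a : EReal) = (-(r : EReal)) + ((a : EReal) + (r : EReal)) := h1.symm
        _ ≤ -(r : EReal) + logLaplace μ ξ := add_le_add le_rfl hlog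
  refine le_trans (by rw [hax]) (key.trans ?_)
  exact EReal.neg_le_neg_iff.mpr (ENNReal.log_monotone hdm)
end

section
/- Let μ be a centered probability measure on ℝ that is absolutely continuous with respect to Lebesgue measure. Then for every p ≥ 1, ∫_{I_μ} (Λ*_μ(x))^p dμ(x) < ∞. -/
open MeasureTheory Real
open scoped ENNReal

/-- Logarithmic Laplace transform of a measure on `ℝ`. -/
noncomputable def logLaplace1 (μ : Measure ℝ) (t : ℝ) : EReal :=
  ENNReal.log (∫⁻ z, ENNReal.ofReal (Real.exp (t * z)) ∂μ)

/-- Cramér transform of a measure on `ℝ`. -/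
noncomputable def cramer1 (μ : Measure ℝ) (x : ℝ) : EReal :=
  ⨆ t : ℝ, ((t * x : ℝ) : EReal) - logLaplace1 μ t

-- small EReal abs lemma
lemma abs_le_of_nonneg_of_le {a : EReal} {c : ℝ} (h0 : 0 ≤ a) (hc : a ≤ (c : EReal)) :
    a.abs ≤ ENNReal.ofReal c := by
  induction a using EReal.rec with
  | bot => simp at h0
  | coe r =>
      rw [EReal.abs_def]
      have h0' : (0:ℝ) ≤ r := by exact_mod_cast h0
      have hc' : r ≤ c := by exact_mod_cast hc
      rw [abs_of_nonneg h0']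
      exact ENNReal.ofReal_le_ofReal hc'
  | top => simp at hc

variable {μ : Measure ℝ} [IsProbabilityMeasure μ]

lemma one_le_lintegral_exp (hint : Integrable (fun x : ℝ => x) μ)
    (hcent : ∫ x, x ∂μ = 0) (t : ℝ) :
    (1 : ℝ≥0∞) ≤ ∫⁻ z, ENNReal.ofReal (Real.exp (t * z)) ∂μ := by
  have hI0 : Integrable (fun z : ℝ => 1 + t * z) μ :=
    (integrable_const 1).add (hint.const_mul t)
  have hI : Integrable (fun z : ℝ => max (1 + t * z) 0) μ := hI0.pos_part
  have h1 : (1 : ℝ) ≤ ∫ z, max (1 + t * z) 0 ∂μ := by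
    have he : ∫ z, (1 + t * z) ∂μ = 1 := by
      rw [integral_add (integrable_const 1) (hint.const_mul t), integral_const_mul, hcent]
      simp
    calc (1:ℝ) = ∫ z, (1 + t * z) ∂μ := he.symm
      _ ≤ ∫ z, max (1 + t * z) 0 ∂μ :=
        integral_mono hI0 hI fun z => le_max_left _ _
  calc (1:ℝ≥0∞) = ENNReal.ofReal 1 := by simp
    _ ≤ ENNReal.ofReal (∫ z, max (1 + t * z) 0 ∂μ) := ENNReal.ofReal_le_ofReal h1
    _ = ∫⁻ z, ENNReal.ofReal (max (1 + t * z) 0) ∂μ :=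
        ofReal_integral_eq_lintegral_ofReal hI (Filter.Eventually.of_forall fun z => le_max_right _ _)
    _ ≤ ∫⁻ z, ENNReal.ofReal (Real.exp (t * z)) ∂μ := by
        refine lintegral_mono fun z => ENNReal.ofReal_le_ofReal ?_
        refine max_le ?_ (Real.exp_pos _).le
        linarith [Real.add_one_le_exp (t * z)]

lemma cramer1_nonneg : 0 ≤ cramer1 μ x := by
  have h := le_iSup (fun t : ℝ => ((t * x : ℝ) : EReal) - logLaplace1 μ t) 0
  refine le_trans ?_ h
  simp [logLaplace1]

lemma cramer1_le_pos (hint : Integrable (fun x : ℝ => x) μ)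
    (hcent : ∫ x, x ∂μ = 0) {x : ℝ} (hx : 0 ≤ x) :
    cramer1 μ x ≤ -(ENNReal.log (μ (Set.Ici x))) := by
  by_cases hm : μ (Set.Ici x) = 0
  · simp [hm]
  rw [cramer1]
  apply iSup_le
  intro t
  set L := ∫⁻ z, ENNReal.ofReal (Real.exp (t * z)) ∂μ with hL
  set m := μ (Set.Ici x) with hmdef
  have hm1 : m ≤ 1 := prob_le_one
  have hmtop : m ≠ ⊤ := (lt_of_le_of_lt hm1 ENNReal.one_lt_top).ne
  have hlogm_bot : ENNReal.log m ≠ ⊥ := by simp [hm]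
  have hlogm_top : ENNReal.log m ≠ ⊤ := by simp [hmtop]
  have hlogm_le : ENNReal.log m ≤ 0 := by simp [hm1]
  rcases le_or_gt 0 t with ht | ht
  · -- Chernoff
    have key : ENNReal.ofReal (Real.exp (t * x)) * m ≤ L := by
      calc ENNReal.ofReal (Real.exp (t * x)) * m
          = ∫⁻ _ in Set.Ici x, ENNReal.ofReal (Real.exp (t * x)) ∂μ := by
            rw [setLIntegral_const]
        _ ≤ ∫⁻ z in Set.Ici x, ENNReal.ofReal (Real.exp (t * z)) ∂μ := by
            refine setLIntegral_mono (ENNReal.measurable_ofReal.comp ((measurable_const_mul t).exp)) fun z hz => ?_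
            exact ENNReal.ofReal_le_ofReal (Real.exp_le_exp.mpr
              (mul_le_mul_of_nonneg_left hz ht))
        _ ≤ L := setLIntegral_le_lintegral _ _
    have hkey' : ((t * x : ℝ) : EReal) + ENNReal.log m ≤ ENNReal.log L := by
      have := ENNReal.log_monotone key
      rwa [ENNReal.log_mul_add, ENNReal.log_ofReal_of_pos (Real.exp_pos _),
        Real.log_exp] at this
    have : ((t * x : ℝ) : EReal) ≤ ENNReal.log L + (-(ENNReal.log m)) := by
      rw [← sub_eq_add_neg]
      exact (EReal.le_sub_iff_add_le (Or.inl hlogm_bot) (Or.inl hlogm_top)).mpr hkey'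
    exact EReal.sub_le_of_le_add' this
  · -- t < 0 : t*x ≤ 0 ≤ Λ(t)
    have h1 : ((t * x : ℝ) : EReal) ≤ 0 := by
      exact_mod_cast mul_nonpos_of_nonpos_of_nonneg ht.le hx
    have h2 : (0 : EReal) ≤ logLaplace1 μ t := by
      rw [logLaplace1]
      calc (0 : EReal) = ENNReal.log 1 := by simp
        _ ≤ _ := ENNReal.log_monotone (one_le_lintegral_exp hint hcent t)
    calc ((t * x : ℝ) : EReal) - logLaplace1 μ t ≤ 0 - 0 := EReal.sub_le_sub h1 h2
      _ ≤ -(ENNReal.log m) := by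
          rw [sub_zero, ← neg_zero]
          exact EReal.neg_le_neg_iff.mpr hlogm_le

lemma cramer1_le_neg (hint : Integrable (fun x : ℝ => x) μ)
    (hcent : ∫ x, x ∂μ = 0) {x : ℝ} (hx : x ≤ 0) :
    cramer1 μ x ≤ -(ENNReal.log (μ (Set.Iic x))) := by
  by_cases hm : μ (Set.Iic x) = 0
  · simp [hm]
  rw [cramer1]
  apply iSup_le
  intro t
  set L := ∫⁻ z, ENNReal.ofReal (Real.exp (t * z)) ∂μ with hL
  set m := μ (Set.Iic x) with hmdef
  have hm1 : m ≤ 1 := prob_le_one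
  have hmtop : m ≠ ⊤ := (lt_of_le_of_lt hm1 ENNReal.one_lt_top).ne
  have hlogm_bot : ENNReal.log m ≠ ⊥ := by simp [hm]
  have hlogm_top : ENNReal.log m ≠ ⊤ := by simp [hmtop]
  have hlogm_le : ENNReal.log m ≤ 0 := by simp [hm1]
  rcases le_or_gt t 0 with ht | ht
  · have key : ENNReal.ofReal (Real.exp (t * x)) * m ≤ L := by
      calc ENNReal.ofReal (Real.exp (t * x)) * m
          = ∫⁻ _ in Set.Iic x, ENNReal.ofReal (Real.exp (t * x)) ∂μ := by
            rw [setLIntegral_const]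
        _ ≤ ∫⁻ z in Set.Iic x, ENNReal.ofReal (Real.exp (t * z)) ∂μ := by
            refine setLIntegral_mono (ENNReal.measurable_ofReal.comp ((measurable_const_mul t).exp)) fun z hz => ?_
            exact ENNReal.ofReal_le_ofReal (Real.exp_le_exp.mpr
              (mul_le_mul_of_nonpos_left hz ht))
        _ ≤ L := setLIntegral_le_lintegral _ _
    have hkey' : ((t * x : ℝ) : EReal) + ENNReal.log m ≤ ENNReal.log L := by
      have := ENNReal.log_monotone key
      rwa [ENNReal.log_mul_add, ENNReal.log_ofReal_of_pos (Real.exp_pos _),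
        Real.log_exp] at this
    have : ((t * x : ℝ) : EReal) ≤ ENNReal.log L + (-(ENNReal.log m)) := by
      rw [← sub_eq_add_neg]
      exact (EReal.le_sub_iff_add_le (Or.inl hlogm_bot) (Or.inl hlogm_top)).mpr hkey'
    exact EReal.sub_le_of_le_add' this
  · have h1 : ((t * x : ℝ) : EReal) ≤ 0 := by
      exact_mod_cast mul_nonpos_of_nonneg_of_nonpos ht.le hx
    have h2 : (0 : EReal) ≤ logLaplace1 μ t := by
      rw [logLaplace1]
      calc (0 : EReal) = ENNReal.log 1 := by simp
        _ ≤ _ := ENNReal.log_monotone (one_le_lintegral_exp hint hcent t)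
    calc ((t * x : ℝ) : EReal) - logLaplace1 μ t ≤ 0 - 0 := EReal.sub_le_sub h1 h2
      _ ≤ -(ENNReal.log m) := by
          rw [sub_zero, ← neg_zero]
          exact EReal.neg_le_neg_iff.mpr hlogm_le

lemma meas_upward (hac : μ ≪ volume) {S : Set ℝ} {c : ℝ≥0∞}
    (hup : ∀ ⦃a b : ℝ⦄, a ∈ S → a ≤ b → b ∈ S)
    (hbdd : ∀ a ∈ S, (0:ℝ) ≤ a)
    (hc : ∀ a ∈ S, μ (Set.Ici a) ≤ c) : μ S ≤ c := by
  rcases S.eq_empty_or_nonempty with rfl | hS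
  · simp
  set i := sInf S with hi
  have hbb : BddBelow S := ⟨0, fun a ha => hbdd a ha⟩
  have hmem : ∀ ε : ℝ, 0 < ε → i + ε ∈ S := by
    intro ε hε
    obtain ⟨u, hu, hu'⟩ := exists_lt_of_csInf_lt hS (lt_add_of_pos_right i hε)
    exact hup hu hu'.le
  have hIoi : Set.Ioi i ⊆ ⋃ n : ℕ, Set.Ici (i + 1/(n+1)) := by
    intro y hy
    obtain ⟨n, hn⟩ := exists_nat_one_div_lt (sub_pos.mpr (Set.mem_Ioi.mp hy))
    refine Set.mem_iUnion.mpr ⟨n, Set.mem_Ici.mpr ?_⟩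
    push_cast at hn ⊢; linarith
  have hIoile : μ (Set.Ioi i) ≤ c := by
    refine le_trans (measure_mono hIoi) ?_
    have hdir : Directed (· ⊆ ·) (fun n : ℕ => Set.Ici (i + 1/(n+1 : ℝ))) := by
      refine Monotone.directed_le fun a b hab => Set.Ici_subset_Ici.mpr ?_
      have hab' : (a:ℝ) ≤ b := by exact_mod_cast hab
      have : 1/((b:ℝ)+1) ≤ 1/((a:ℝ)+1) :=
        one_div_le_one_div_of_le (by positivity) (by linarith)
      linarith
    rw [Directed.measure_iUnion hdir]
    refine iSup_le fun n => hc _ (hmem _ (by positivity))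
  calc μ S ≤ μ (Set.Ici i) := measure_mono fun a ha => csInf_le hbb ha
    _ ≤ μ {i} + μ (Set.Ioi i) := by
        rw [← Set.Ioi_union_left, Set.union_comm]
        exact measure_union_le _ _
    _ ≤ 0 + c := by
        refine add_le_add (le_of_eq (hac ?_)) hIoile
        exact measure_singleton i
    _ = c := by simp

omit [IsProbabilityMeasure μ] in
lemma meas_downward (hac : μ ≪ volume) {S : Set ℝ} {c : ℝ≥0∞}
    (hdn : ∀ ⦃a b : ℝ⦄, a ∈ S → b ≤ a → b ∈ S)
    (hbdd : ∀ a ∈ S, a ≤ (0:ℝ))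
    (hc : ∀ a ∈ S, μ (Set.Iic a) ≤ c) : μ S ≤ c := by
  rcases S.eq_empty_or_nonempty with rfl | hS
  · simp
  set i := sSup S with hi
  have hbb : BddAbove S := ⟨0, fun a ha => hbdd a ha⟩
  have hmem : ∀ ε : ℝ, 0 < ε → i - ε ∈ S := by
    intro ε hε
    obtain ⟨u, hu, hu'⟩ := exists_lt_of_lt_csSup hS (sub_lt_self i hε)
    exact hdn hu hu'.le
  have hIio : Set.Iio i ⊆ ⋃ n : ℕ, Set.Iic (i - 1/(n+1)) := by
    intro y hy
    obtain ⟨n, hn⟩ := exists_nat_one_div_lt (sub_pos.mpr (Set.mem_Iio.mp hy))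
    refine Set.mem_iUnion.mpr ⟨n, Set.mem_Iic.mpr ?_⟩
    linarith
  have hIiole : μ (Set.Iio i) ≤ c := by
    refine le_trans (measure_mono hIio) ?_
    have hdir : Directed (· ⊆ ·) (fun n : ℕ => Set.Iic (i - 1/(n+1 : ℝ))) := by
      refine Monotone.directed_le fun a b hab => Set.Iic_subset_Iic.mpr ?_
      have hab' : (a:ℝ) ≤ b := by exact_mod_cast hab
      have : 1/((b:ℝ)+1) ≤ 1/((a:ℝ)+1) :=
        one_div_le_one_div_of_le (by positivity) (by linarith)
      linarith
    rw [Directed.measure_iUnion hdir]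
    refine iSup_le fun n => hc _ (hmem _ (by positivity))
  calc μ S ≤ μ (Set.Iic i) := measure_mono fun a ha => le_csSup hbb ha
    _ ≤ μ {i} + μ (Set.Iio i) := by
        rw [← Set.Iio_union_right, Set.union_comm]
        exact measure_union_le _ _
    _ ≤ 0 + c := by
        refine add_le_add (le_of_eq (hac ?_)) hIiole
        exact measure_singleton i
    _ = c := by simp
lemma summable_aux (p : ℝ) : Summable (fun n : ℕ => ((n:ℝ)+1)^p * Real.exp (-(n:ℝ))) := by
  set k := ⌈p⌉₊ with hk
  set r := Real.exp (-1) with hr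
  have hr0 : 0 < r := Real.exp_pos _
  have hr1 : r < 1 := by rw [hr, Real.exp_lt_one_iff]; norm_num
  have hbase : Summable (fun n : ℕ => (n:ℝ)^k * r^n) :=
    summable_pow_mul_geometric_of_norm_lt_one k (by rwa [Real.norm_eq_abs, abs_of_pos hr0])
  have hshift : Summable (fun n : ℕ => ((n:ℝ)+1)^k * r^(n+1)) := by
    have := (summable_nat_add_iff 1).mpr hbase
    simpa [add_comm] using this
  have hmain : Summable (fun n : ℕ => ((n:ℝ)+1)^k * r^n) := by
    have := hshift.mul_left r⁻¹
    refine this.congr fun n => ?_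
    rw [pow_succ]
    field_simp
  refine Summable.of_nonneg_of_le (fun n => by positivity) (fun n => ?_) hmain
  have h1 : ((n:ℝ)+1)^p ≤ ((n:ℝ)+1)^k := by
    rw [← Real.rpow_natCast ((n:ℝ)+1) k]
    exact Real.rpow_le_rpow_of_exponent_le (by linarith [Nat.cast_nonneg (α := ℝ) n]) (Nat.le_ceil p)
  have h2 : Real.exp (-(n:ℝ)) = r^n := by
    rw [hr, ← Real.exp_nat_mul]; ring_nf
  rw [h2]
  exact mul_le_mul_of_nonneg_right h1 (by positivity)

lemma side_pos (hac : μ ≪ volume) (hint : Integrable (fun x : ℝ => x) μ)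
    (hcent : ∫ x, x ∂μ = 0) {p : ℝ} (hp : 1 ≤ p) :
    ∫⁻ x in {x | 0 < μ (Set.Ici x)} ∩ Set.Ici 0, (cramer1 μ x).abs ^ p ∂μ < ⊤ := by
  have hanti : Antitone (fun x : ℝ => μ (Set.Ici x)) :=
    fun a b hab => measure_mono (Set.Ici_subset_Ici.mpr hab)
  set A : ℕ → Set ℝ := fun n =>
    ({x | μ (Set.Ici x) ≤ ENNReal.ofReal (Real.exp (-(n:ℝ)))} ∩
      {x | ENNReal.ofReal (Real.exp (-((n:ℝ)+1))) < μ (Set.Ici x)}) ∩ Set.Ici 0 with hA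
  have hAmeas : ∀ n, MeasurableSet (A n) := by
    intro n
    refine (MeasurableSet.inter (MeasurableSet.inter ?_ ?_) measurableSet_Ici)
    · exact Set.OrdConnected.measurableSet
        ⟨fun a ha b _ z hz => le_trans (hanti hz.1) ha⟩
    · exact Set.OrdConnected.measurableSet
        ⟨fun a _ b hb z hz => lt_of_lt_of_le hb (hanti hz.2)⟩
  -- covering
  have hcover : {x | 0 < μ (Set.Ici x)} ∩ Set.Ici 0 ⊆ ⋃ n, A n := by
    rintro x ⟨hm, hx⟩
    have hm : 0 < μ (Set.Ici x) := hm
    have hex : ∃ n : ℕ, ENNReal.ofReal (Real.exp (-((n:ℝ)+1))) < μ (Set.Ici x) := by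
      obtain ⟨r, hr0, hrlt, hrm⟩ := ENNReal.lt_iff_exists_real_btwn.mp hm
      have hr0' : 0 < r := ENNReal.ofReal_pos.mp (lt_of_le_of_lt zero_le hrlt)
      obtain ⟨n, hn⟩ := exists_nat_one_div_lt hr0'
      refine ⟨n, lt_of_le_of_lt (le_trans ?_ (le_of_lt ((ENNReal.ofReal_lt_ofReal_iff hr0').mpr hn))) hrm⟩
      apply ENNReal.ofReal_le_ofReal
      rw [Real.exp_neg]
      rw [one_div]
      apply inv_anti₀ (by positivity)
      calc (n:ℝ) + 1 ≤ Real.exp (n:ℝ) := Real.add_one_le_exp (n:ℝ)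
        _ ≤ Real.exp ((n:ℝ)+1) := Real.exp_le_exp.mpr (by linarith)
    refine Set.mem_iUnion.mpr ⟨Nat.find hex, ⟨⟨?_, Nat.find_spec hex⟩, hx⟩⟩
    rcases Nat.eq_zero_or_pos (Nat.find hex) with h0 | hpos
    · rw [h0]
      simp only [Nat.cast_zero, neg_zero, Real.exp_zero, ENNReal.ofReal_one]
      exact prob_le_one
    · have := Nat.find_min hex (Nat.sub_lt hpos one_pos)
      rw [not_lt] at this
      have hcast : (↑(Nat.find hex - 1) : ℝ) + 1 = (Nat.find hex : ℝ) := by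
        have := Nat.succ_pred_eq_of_pos hpos
        push_cast [Nat.cast_sub hpos]
        ring
      rwa [hcast] at this
  have hbound : ∀ n : ℕ, ∫⁻ x in A n, (cramer1 μ x).abs ^ p ∂μ ≤
      ENNReal.ofReal (((n:ℝ)+1)^p * Real.exp (-(n:ℝ))) := by
    intro n
    have hptw : ∀ x ∈ A n, (cramer1 μ x).abs ^ p ≤ (ENNReal.ofReal ((n:ℝ)+1)) ^ p := by
      intro x hx
      obtain ⟨⟨h1, h2⟩, hx0⟩ := hx
      have hlog : ((-((n:ℝ)+1) : ℝ) : EReal) ≤ ENNReal.log (μ (Set.Ici x)) := by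
        have := ENNReal.log_monotone h2.le
        rwa [ENNReal.log_ofReal_of_pos (Real.exp_pos _), Real.log_exp] at this
      have hneg : -(ENNReal.log (μ (Set.Ici x))) ≤ (((n:ℝ)+1 : ℝ) : EReal) := by
        have := EReal.neg_le_neg_iff.mpr hlog
        rwa [← EReal.coe_neg, neg_neg] at this
      have hle : cramer1 μ x ≤ (((n:ℝ)+1 : ℝ) : EReal) :=
        le_trans (cramer1_le_pos hint hcent hx0) hneg
      exact ENNReal.rpow_le_rpow (abs_le_of_nonneg_of_le cramer1_nonneg hle) (by linarith)
    have hAn : μ (A n) ≤ ENNReal.ofReal (Real.exp (-(n:ℝ))) := by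
      refine le_trans (measure_mono (fun x hx => ⟨hx.1.1, hx.2⟩ :
          A n ⊆ {x | μ (Set.Ici x) ≤ ENNReal.ofReal (Real.exp (-(n:ℝ)))} ∩ Set.Ici 0)) ?_
      refine meas_upward hac ?_ ?_ ?_
      · rintro a b ⟨ha1, ha2⟩ hab; exact ⟨le_trans (hanti hab) ha1, le_trans ha2 hab⟩
      · rintro a ⟨_, ha2⟩; exact ha2
      · rintro a ⟨ha1, _⟩; exact ha1
    calc ∫⁻ x in A n, (cramer1 μ x).abs ^ p ∂μ
        ≤ ∫⁻ _ in A n, (ENNReal.ofReal ((n:ℝ)+1)) ^ p ∂μ :=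
          lintegral_mono_ae ((ae_restrict_mem (hAmeas n)).mono hptw)
      _ = (ENNReal.ofReal ((n:ℝ)+1)) ^ p * μ (A n) := setLIntegral_const _ _
      _ ≤ ENNReal.ofReal (((n:ℝ)+1)^p) * ENNReal.ofReal (Real.exp (-(n:ℝ))) :=
          mul_le_mul' (le_of_eq (ENNReal.ofReal_rpow_of_pos (by positivity))) hAn
      _ = ENNReal.ofReal (((n:ℝ)+1)^p * Real.exp (-(n:ℝ))) :=
          (ENNReal.ofReal_mul (by positivity)).symm
  calc ∫⁻ x in {x | 0 < μ (Set.Ici x)} ∩ Set.Ici 0, (cramer1 μ x).abs ^ p ∂μ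
      ≤ ∫⁻ x in ⋃ n, A n, (cramer1 μ x).abs ^ p ∂μ :=
        lintegral_mono' (Measure.restrict_mono hcover le_rfl) le_rfl
    _ ≤ ∑' n, ∫⁻ x in A n, (cramer1 μ x).abs ^ p ∂μ := lintegral_iUnion_le _ _
    _ ≤ ∑' n : ℕ, ENNReal.ofReal (((n:ℝ)+1)^p * Real.exp (-(n:ℝ))) := ENNReal.tsum_le_tsum hbound
    _ = ENNReal.ofReal (∑' n : ℕ, ((n:ℝ)+1)^p * Real.exp (-(n:ℝ))) :=
        (ENNReal.ofReal_tsum_of_nonneg (fun n => by positivity) (summable_aux p)).symm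
    _ < ⊤ := ENNReal.ofReal_lt_top

lemma side_neg (hac : μ ≪ volume) (hint : Integrable (fun x : ℝ => x) μ)
    (hcent : ∫ x, x ∂μ = 0) {p : ℝ} (hp : 1 ≤ p) :
    ∫⁻ x in {x | 0 < μ (Set.Iic x)} ∩ Set.Iic 0, (cramer1 μ x).abs ^ p ∂μ < ⊤ := by
  have hmono : Monotone (fun x : ℝ => μ (Set.Iic x)) :=
    fun a b hab => measure_mono (Set.Iic_subset_Iic.mpr hab)
  set A : ℕ → Set ℝ := fun n =>
    ({x | μ (Set.Iic x) ≤ ENNReal.ofReal (Real.exp (-(n:ℝ)))} ∩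
      {x | ENNReal.ofReal (Real.exp (-((n:ℝ)+1))) < μ (Set.Iic x)}) ∩ Set.Iic 0 with hA
  have hAmeas : ∀ n, MeasurableSet (A n) := by
    intro n
    refine (MeasurableSet.inter (MeasurableSet.inter ?_ ?_) measurableSet_Iic)
    · exact Set.OrdConnected.measurableSet
        ⟨fun a _ b hb z hz => le_trans (hmono hz.2) hb⟩
    · exact Set.OrdConnected.measurableSet
        ⟨fun a ha b _ z hz => lt_of_lt_of_le ha (hmono hz.1)⟩
  have hcover : {x | 0 < μ (Set.Iic x)} ∩ Set.Iic 0 ⊆ ⋃ n, A n := by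
    rintro x ⟨hm, hx⟩
    have hm : 0 < μ (Set.Iic x) := hm
    have hex : ∃ n : ℕ, ENNReal.ofReal (Real.exp (-((n:ℝ)+1))) < μ (Set.Iic x) := by
      obtain ⟨r, hr0, hrlt, hrm⟩ := ENNReal.lt_iff_exists_real_btwn.mp hm
      have hr0' : 0 < r := ENNReal.ofReal_pos.mp (lt_of_le_of_lt zero_le hrlt)
      obtain ⟨n, hn⟩ := exists_nat_one_div_lt hr0'
      refine ⟨n, lt_of_le_of_lt (le_trans ?_ (le_of_lt ((ENNReal.ofReal_lt_ofReal_iff hr0').mpr hn))) hrm⟩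
      apply ENNReal.ofReal_le_ofReal
      rw [Real.exp_neg]
      rw [one_div]
      apply inv_anti₀ (by positivity)
      calc (n:ℝ) + 1 ≤ Real.exp (n:ℝ) := Real.add_one_le_exp (n:ℝ)
        _ ≤ Real.exp ((n:ℝ)+1) := Real.exp_le_exp.mpr (by linarith)
    refine Set.mem_iUnion.mpr ⟨Nat.find hex, ⟨⟨?_, Nat.find_spec hex⟩, hx⟩⟩
    rcases Nat.eq_zero_or_pos (Nat.find hex) with h0 | hpos
    · rw [h0]
      simp only [Nat.cast_zero, neg_zero, Real.exp_zero, ENNReal.ofReal_one]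
      exact prob_le_one
    · have := Nat.find_min hex (Nat.sub_lt hpos one_pos)
      rw [not_lt] at this
      have hcast : (↑(Nat.find hex - 1) : ℝ) + 1 = (Nat.find hex : ℝ) := by
        have := Nat.succ_pred_eq_of_pos hpos
        push_cast [Nat.cast_sub hpos]
        ring
      rwa [hcast] at this
  have hbound : ∀ n : ℕ, ∫⁻ x in A n, (cramer1 μ x).abs ^ p ∂μ ≤
      ENNReal.ofReal (((n:ℝ)+1)^p * Real.exp (-(n:ℝ))) := by
    intro n
    have hptw : ∀ x ∈ A n, (cramer1 μ x).abs ^ p ≤ (ENNReal.ofReal ((n:ℝ)+1)) ^ p := by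
      intro x hx
      obtain ⟨⟨h1, h2⟩, hx0⟩ := hx
      have hlog : ((-((n:ℝ)+1) : ℝ) : EReal) ≤ ENNReal.log (μ (Set.Iic x)) := by
        have := ENNReal.log_monotone h2.le
        rwa [ENNReal.log_ofReal_of_pos (Real.exp_pos _), Real.log_exp] at this
      have hneg : -(ENNReal.log (μ (Set.Iic x))) ≤ (((n:ℝ)+1 : ℝ) : EReal) := by
        have := EReal.neg_le_neg_iff.mpr hlog
        rwa [← EReal.coe_neg, neg_neg] at this
      have hle : cramer1 μ x ≤ (((n:ℝ)+1 : ℝ) : EReal) :=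
        le_trans (cramer1_le_neg hint hcent hx0) hneg
      exact ENNReal.rpow_le_rpow (abs_le_of_nonneg_of_le cramer1_nonneg hle) (by linarith)
    have hAn : μ (A n) ≤ ENNReal.ofReal (Real.exp (-(n:ℝ))) := by
      refine le_trans (measure_mono (fun x hx => ⟨hx.1.1, hx.2⟩ :
          A n ⊆ {x | μ (Set.Iic x) ≤ ENNReal.ofReal (Real.exp (-(n:ℝ)))} ∩ Set.Iic 0)) ?_
      refine meas_downward hac ?_ ?_ ?_
      · rintro a b ⟨ha1, ha2⟩ hab; exact ⟨le_trans (hmono hab) ha1, le_trans hab ha2⟩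
      · rintro a ⟨_, ha2⟩; exact ha2
      · rintro a ⟨ha1, _⟩; exact ha1
    calc ∫⁻ x in A n, (cramer1 μ x).abs ^ p ∂μ
        ≤ ∫⁻ _ in A n, (ENNReal.ofReal ((n:ℝ)+1)) ^ p ∂μ :=
          lintegral_mono_ae ((ae_restrict_mem (hAmeas n)).mono hptw)
      _ = (ENNReal.ofReal ((n:ℝ)+1)) ^ p * μ (A n) := setLIntegral_const _ _
      _ ≤ ENNReal.ofReal (((n:ℝ)+1)^p) * ENNReal.ofReal (Real.exp (-(n:ℝ))) :=
          mul_le_mul' (le_of_eq (ENNReal.ofReal_rpow_of_pos (by positivity))) hAn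
      _ = ENNReal.ofReal (((n:ℝ)+1)^p * Real.exp (-(n:ℝ))) :=
          (ENNReal.ofReal_mul (by positivity)).symm
  calc ∫⁻ x in {x | 0 < μ (Set.Iic x)} ∩ Set.Iic 0, (cramer1 μ x).abs ^ p ∂μ
      ≤ ∫⁻ x in ⋃ n, A n, (cramer1 μ x).abs ^ p ∂μ :=
        lintegral_mono' (Measure.restrict_mono hcover le_rfl) le_rfl
    _ ≤ ∑' n : ℕ, ∫⁻ x in A n, (cramer1 μ x).abs ^ p ∂μ := lintegral_iUnion_le _ _
    _ ≤ ∑' n : ℕ, ENNReal.ofReal (((n:ℝ)+1)^p * Real.exp (-(n:ℝ))) := ENNReal.tsum_le_tsum hbound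
    _ = ENNReal.ofReal (∑' n : ℕ, ((n:ℝ)+1)^p * Real.exp (-(n:ℝ))) :=
        (ENNReal.ofReal_tsum_of_nonneg (fun n => by positivity) (summable_aux p)).symm
    _ < ⊤ := ENNReal.ofReal_lt_top


/-- The open interval `I_μ = (−α₋, α₊)` spanned by the support of `μ`. -/
def Isupp (μ : Measure ℝ) : Set ℝ :=
  {x | 0 < μ (Set.Ici x)} ∩ {x | 0 < μ (Set.Iic x)}

/-- For a centered absolutely continuous probability measure on `ℝ`, the Cramér transform
has finite moments of all orders `p ≥ 1` on `I_μ`. -/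
theorem stmt5 (μ : Measure ℝ) [IsProbabilityMeasure μ] (hac : μ ≪ volume)
    (hint : Integrable (fun x : ℝ => x) μ) (hcent : ∫ x, x ∂μ = 0) (p : ℝ) (hp : 1 ≤ p) :
    ∫⁻ x in Isupp μ, (cramer1 μ x).abs ^ p ∂μ < ⊤ := by
  set Bp := {x | 0 < μ (Set.Ici x)} ∩ Set.Ici 0
  set Bn := {x | 0 < μ (Set.Iic x)} ∩ Set.Iic 0
  have hsub : Isupp μ ⊆ Bp ∪ Bn := by
    rintro x ⟨h1, h2⟩
    rcases le_total 0 x with hx | hx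
    · exact Or.inl ⟨h1, hx⟩
    · exact Or.inr ⟨h2, hx⟩
  calc ∫⁻ x in Isupp μ, (cramer1 μ x).abs ^ p ∂μ
      ≤ ∫⁻ x in Bp ∪ Bn, (cramer1 μ x).abs ^ p ∂μ :=
        lintegral_mono' (Measure.restrict_mono hsub le_rfl) le_rfl
    _ ≤ ∫⁻ x in Bp, (cramer1 μ x).abs ^ p ∂μ + ∫⁻ x in Bn, (cramer1 μ x).abs ^ p ∂μ := by
        refine le_trans (lintegral_mono' (Measure.restrict_union_le _ _) le_rfl) ?_
        rw [lintegral_add_measure]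
    _ < ⊤ := ENNReal.add_lt_top.mpr ⟨side_pos hac hint hcent hp, side_neg hac hint hcent hp⟩
end

section
/- Let K be a centered convex body of volume 1 in ℝⁿ, n ≥ 2, κ ∈ (0,1/n], and μ a centered κ-concave probability measure with supp(μ) = K and density f. Then (E_μ[(Λ*_μ)²])^{1/2} ≤ (c ln n / κ) ‖f‖_∞^{1/2}, where c > 0 is an absolute constant. In particular, E_μ(Λ*_μ) ≤ (c ln n / κ) ‖f‖_∞^{1/2}. -/
open MeasureTheory Real Pointwise
open scoped RealInnerProductSpace ENNReal

/-- A measure `μ` on `ℝⁿ` is `κ`-concave. -/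
def KConcave {n : ℕ} (κ : ℝ) (μ : Measure (EuclideanSpace ℝ (Fin n))) : Prop :=
  ∀ A B : Set (EuclideanSpace ℝ (Fin n)), IsCompact A → IsCompact B →
    0 < μ A → 0 < μ B → ∀ l : ℝ, l ∈ Set.Ioo (0 : ℝ) 1 →
      (ENNReal.ofReal (1 - l) * (μ A) ^ κ + ENNReal.ofReal l * (μ B) ^ κ) ^ (1 / κ)
        ≤ μ ((1 - l) • A + l • B)

section Auxiliary

open Set Filter Topology

lemma zero_mem_interior_aux {n : ℕ} {K : Set (EuclideanSpace ℝ (Fin n))}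
    (hKc : IsCompact K) (hKconv : Convex ℝ K) (hKint : (interior K).Nonempty)
    (hcent : (∫ x in K, x) = 0) : 0 ∈ interior K := by
  by_contra h0
  obtain ⟨f, hf⟩ := geometric_hahn_banach_point_open hKconv.interior isOpen_interior h0
  have hf0 : ∀ b ∈ interior K, 0 < f b := by
    intro b hb; simpa using hf b hb
  have hKsub : K ⊆ closure (interior K) := by
    obtain ⟨a, ha⟩ := hKint
    intro b hb
    refine mem_closure_iff_seq_limit.2 ⟨fun k => (1/(k+2) : ℝ) • a + (1 - 1/(k+2) : ℝ) • b,
      fun k => hKconv.combo_interior_self_mem_interior ha hb (by positivity) ?_ (by ring), ?_⟩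
    · have h2 : (1:ℝ) ≤ (k:ℝ) + 2 := by
        have : (0:ℝ) ≤ (k:ℝ) := Nat.cast_nonneg k
        linarith
      have : (1:ℝ)/((k:ℝ)+2) ≤ 1 := by
        rw [div_le_one (by linarith)]; linarith
      linarith
    · have hc : Filter.Tendsto (fun k : ℕ => (1/((k:ℝ)+2) : ℝ)) Filter.atTop (nhds 0) := by
        have := Filter.Tendsto.comp (tendsto_one_div_add_atTop_nhds_zero_nat (𝕜 := ℝ))
          (Filter.tendsto_add_atTop_nat 1)
        refine this.congr fun k => ?_
        push_cast [Function.comp]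
        ring_nf
      have h1 : Filter.Tendsto (fun k : ℕ => (1/((k:ℝ)+2)) • a + (1 - 1/((k:ℝ)+2) : ℝ) • b)
          Filter.atTop (nhds ((0:ℝ) • a + (1 - 0 : ℝ) • b)) :=
        (hc.smul_const a).add ((tendsto_const_nhds.sub hc).smul_const b)
      simpa using h1
  have hfK : ∀ b ∈ K, 0 ≤ f b := by
    intro b hb
    have : closure (interior K) ⊆ {x | 0 ≤ f x} :=
      closure_minimal (fun x hx => (hf0 x hx).le) (isClosed_le continuous_const f.continuous)
    exact this (hKsub hb)
  have hKm : MeasurableSet K := hKc.isClosed.measurableSet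
  have hint : IntegrableOn (fun x => x) K (volume) :=
    continuous_id.continuousOn.integrableOn_compact hKc
  have hfint : Integrable (fun x => f x) (volume.restrict K) := f.integrable_comp hint
  have hIf : ∫ x in K, f x = 0 := by
    have h2 := ContinuousLinearMap.integral_comp_comm f hint
    rw [hcent, map_zero] at h2
    simpa using h2
  have hae : 0 ≤ᵐ[volume.restrict K] fun x => f x :=
    MeasureTheory.ae_restrict_of_forall_mem hKm hfK
  have hzero : (fun x => f x) =ᵐ[volume.restrict K] 0 :=
    (MeasureTheory.integral_eq_zero_iff_of_nonneg_ae hae hfint).mp hIf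
  have hposvol : 0 < volume (interior K) := isOpen_interior.measure_pos volume hKint
  have hnull : volume.restrict K {x | f x ≠ 0} = 0 := by
    simpa [Filter.EventuallyEq, ae_iff] using hzero
  have hres : volume.restrict K (interior K) = 0 := by
    refine measure_mono_null (fun x hx => ?_) hnull
    exact (hf0 x hx).ne'
  rw [Measure.restrict_apply isOpen_interior.measurableSet,
    inter_eq_self_of_subset_left interior_subset] at hres
  exact hposvol.ne' hres

set_option maxHeartbeats 1000000 in
lemma halfspace_meas {n : ℕ} {K : Set (EuclideanSpace ℝ (Fin n))} {κ : ℝ}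
    {μ : Measure (EuclideanSpace ℝ (Fin n))}
    (hKc : IsCompact K) (h0K : 0 ∈ interior K)
    (hprob : IsProbabilityMeasure μ) (hconc : KConcave κ μ) (hκ : 0 < κ)
    (hsupp : μ Kᶜ = 0)
    (hpos : ∀ U, IsOpen U → (U ∩ K).Nonempty → 0 < μ U)
    {ξ : EuclideanSpace ℝ (Fin n)} (hξ : ξ ≠ 0)
    (hcent : ∫ z, ⟪z, ξ⟫ ∂μ = 0)
    {x : EuclideanSpace ℝ (Fin n)} (hx : x ∈ interior K) :
    ENNReal.ofReal (((1 - gauge K x)/3) ^ (1/κ) * 2⁻¹) ≤ μ {z | ⟪ξ, x⟫ ≤ ⟪ξ, z⟫} := by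
  have hKm : MeasurableSet K := hKc.isClosed.measurableSet
  have htc : Continuous fun z : EuclideanSpace ℝ (Fin n) => ⟪ξ, z⟫ :=
    continuous_const.inner continuous_id
  -- max point
  obtain ⟨y, hyK, hymax⟩ := hKc.exists_isMaxOn ⟨0, interior_subset h0K⟩ htc.continuousOn
  have hymax' : ∀ z ∈ K, ⟪ξ, z⟫ ≤ ⟪ξ, y⟫ := fun z hz => hymax hz
  set h : ℝ := ⟪ξ, y⟫ with hh_def
  -- h > 0
  obtain ⟨ε, hε, hball⟩ : ∃ ε > 0, Metric.ball 0 ε ⊆ K := by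
    rcases Metric.mem_nhds_iff.1 (mem_interior_iff_mem_nhds.1 h0K) with ⟨ε, hε, hb⟩
    exact ⟨ε, hε, hb⟩
  have hξn : 0 < ‖ξ‖ := norm_pos_iff.2 hξ
  have hh : 0 < h := by
    have hz₀K : (ε/(2*‖ξ‖)) • ξ ∈ K := by
      apply hball
      simp only [Metric.mem_ball, dist_zero_right, norm_smul, Real.norm_eq_abs]
      rw [abs_of_pos (by positivity)]
      rw [div_mul_eq_mul_div, mul_comm]
      rw [div_lt_iff₀ (by positivity)]
      nlinarith
    have := hymax' _ hz₀K
    rw [real_inner_smul_right, real_inner_self_eq_norm_sq] at this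
    have hlt : 0 < ε/(2*‖ξ‖) * ‖ξ‖^2 := by positivity
    linarith
  set r : ℝ := gauge K x with hr_def
  have hr0 : 0 ≤ r := gauge_nonneg x
  have hr1 : r < 1 := interior_subset_gauge_lt_one K hx
  have habs : Absorbent ℝ K := absorbent_nhds_zero (mem_interior_iff_mem_nhds.1 h0K)
  -- ⟪ξ, x⟫ ≤ r * h
  have hξx : ⟪ξ, x⟫ ≤ r * h := by
    refine le_of_forall_pos_le_add fun ε' hε' => ?_
    have hrs : gauge K x < r + ε'/h := by
      simp only [← hr_def]
      have : 0 < ε'/h := by positivity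
      linarith
    obtain ⟨b, hb0, hbs, hbmem⟩ := exists_lt_of_gauge_lt habs hrs
    obtain ⟨k, hk, rfl⟩ := hbmem
    rw [real_inner_smul_right]
    have hkh : ⟪ξ, k⟫ ≤ h := hymax' k hk
    have : b * ⟪ξ, k⟫ ≤ b * h := by nlinarith
    have h2 : b * h ≤ (r + ε'/h) * h := by nlinarith
    have h3 : (r + ε'/h) * h = r * h + ε' := by field_simp
    linarith
  -- Markov : μ A ≥ 1/2 where A = K ∩ {z | -(2h) ≤ ⟪ξ,z⟫}
  set A : Set (EuclideanSpace ℝ (Fin n)) := K ∩ {z | -(2*h) ≤ ⟪ξ, z⟫} with hA_def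
  have hAc : IsCompact A :=
    hKc.inter_right ((isClosed_le continuous_const htc))
  have hAm : MeasurableSet A := hAc.isClosed.measurableSet
  obtain ⟨R, hR⟩ := hKc.isBounded.subset_closedBall 0
  have haeK : ∀ᵐ z ∂μ, z ∈ K := by
    rw [ae_iff]
    exact hsupp
  have hbound : ∀ᵐ z ∂μ, ‖⟪ξ, z⟫‖ ≤ ‖ξ‖ * R := by
    filter_upwards [haeK] with z hz
    have h1 : ‖z‖ ≤ R := by simpa [Metric.mem_closedBall, dist_zero_right] using hR hz
    calc ‖⟪ξ, z⟫‖ = |⟪ξ, z⟫| := rfl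
    _ ≤ ‖ξ‖ * ‖z‖ := abs_real_inner_le_norm ξ z
    _ ≤ ‖ξ‖ * R := by nlinarith [norm_nonneg ξ]
  have hint : Integrable (fun z => ⟪ξ, z⟫) μ :=
    Integrable.mono' (integrable_const (‖ξ‖ * R)) htc.aestronglyMeasurable hbound
  have hintm : Integrable (fun z => max (-⟪ξ, z⟫) 0) μ := hint.neg.pos_part
  have hintp : Integrable (fun z => max ⟪ξ, z⟫ 0) μ := hint.pos_part
  have hcent' : ∫ z, ⟪ξ, z⟫ ∂μ = 0 := by
    rw [← hcent]; congr 1; ext z; exact (real_inner_comm ξ z).symm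
  have hsum : ∫ z, max ⟪ξ, z⟫ 0 ∂μ - ∫ z, max (-⟪ξ, z⟫) 0 ∂μ = 0 := by
    rw [← integral_sub hintp hintm]
    have heq : (fun z : EuclideanSpace ℝ (Fin n) => max ⟪ξ, z⟫ 0 - max (-⟪ξ, z⟫) 0) =
        fun z => ⟪ξ, z⟫ := funext fun z => max_zero_sub_max_neg_zero_eq_self _
    rw [heq, hcent']
  have htple : ∫ z, max ⟪ξ, z⟫ 0 ∂μ ≤ h := by
    have hle : ∀ᵐ z ∂μ, max ⟪ξ, z⟫ 0 ≤ h := by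
      filter_upwards [haeK] with z hz
      exact max_le (hymax' z hz) hh.le
    calc ∫ z, max ⟪ξ, z⟫ 0 ∂μ ≤ ∫ _, h ∂μ := integral_mono_ae hintp (integrable_const h) hle
    _ = h := by simp
  have htmle : ∫ z, max (-⟪ξ, z⟫) 0 ∂μ ≤ h := by linarith
  have hmarkov : μ {z | ⟪ξ, z⟫ < -(2*h)} ≤ ENNReal.ofReal 2⁻¹ := by
    have hmeas : AEMeasurable (fun z => ENNReal.ofReal (max (-⟪ξ, z⟫) 0)) μ :=
      (ENNReal.measurable_ofReal.comp ((htc.neg.max continuous_const).measurable)).aemeasurable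
    have hmk := mul_meas_ge_le_lintegral₀ hmeas (ENNReal.ofReal (2*h))
    have hlin : ∫⁻ z, ENNReal.ofReal (max (-⟪ξ, z⟫) 0) ∂μ ≤ ENNReal.ofReal h := by
      rw [← ofReal_integral_eq_lintegral_ofReal hintm
        (Filter.Eventually.of_forall fun z => le_max_right _ _)]
      exact ENNReal.ofReal_le_ofReal htmle
    have hss : {z : EuclideanSpace ℝ (Fin n) | ⟪ξ, z⟫ < -(2*h)} ⊆
        {z | ENNReal.ofReal (2*h) ≤ ENNReal.ofReal (max (-⟪ξ, z⟫) 0)} := by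
      intro z hz
      simp only [mem_setOf_eq] at hz ⊢
      apply ENNReal.ofReal_le_ofReal
      rw [le_max_iff]; left; linarith
    have h2 : ENNReal.ofReal (2*h) * μ {z | ⟪ξ, z⟫ < -(2*h)} ≤ ENNReal.ofReal h :=
      le_trans (mul_le_mul_right (measure_mono hss) _) (le_trans hmk hlin)
    have h2h : (0:ℝ) < 2*h := by linarith
    have hm : μ {z | ⟪ξ, z⟫ < -(2*h)} ≤ ENNReal.ofReal h / ENNReal.ofReal (2*h) := by
      rw [ENNReal.le_div_iff_mul_le (Or.inl (ne_of_gt (ENNReal.ofReal_pos.2 h2h)))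
        (Or.inl ENNReal.ofReal_ne_top), mul_comm]
      exact h2
    calc μ {z | ⟪ξ, z⟫ < -(2*h)} ≤ ENNReal.ofReal h / ENNReal.ofReal (2*h) := hm
    _ = ENNReal.ofReal (h / (2*h)) := (ENNReal.ofReal_div_of_pos h2h).symm
    _ = ENNReal.ofReal 2⁻¹ := by rw [show h/(2*h) = 2⁻¹ by field_simp]
  have hA : ENNReal.ofReal 2⁻¹ ≤ μ A := by
    have hAc' : μ Aᶜ ≤ ENNReal.ofReal 2⁻¹ := by
      have : Aᶜ ⊆ Kᶜ ∪ {z | ⟪ξ, z⟫ < -(2*h)} := by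
        intro z hz
        rw [hA_def, compl_inter] at hz
        rcases hz with hz | hz
        · exact Or.inl hz
        · right; simp only [mem_compl_iff, mem_setOf_eq, not_le] at hz; exact hz
      calc μ Aᶜ ≤ μ (Kᶜ ∪ {z | ⟪ξ, z⟫ < -(2*h)}) := measure_mono this
      _ ≤ μ Kᶜ + μ {z | ⟪ξ, z⟫ < -(2*h)} := measure_union_le _ _
      _ = μ {z | ⟪ξ, z⟫ < -(2*h)} := by rw [hsupp, zero_add]
      _ ≤ ENNReal.ofReal 2⁻¹ := hmarkov
    have h1 : μ A = 1 - μ Aᶜ := by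
      rw [measure_compl hAm (measure_ne_top μ A)]
      rw [measure_univ]
      rw [ENNReal.sub_sub_cancel ENNReal.one_ne_top (prob_le_one)]
    rw [h1]
    calc ENNReal.ofReal 2⁻¹ = 1 - ENNReal.ofReal 2⁻¹ := by
          rw [← ENNReal.ofReal_one, ← ENNReal.ofReal_sub _ (by norm_num)]
          norm_num
    _ ≤ 1 - μ Aᶜ := tsub_le_tsub_left hAc' 1
  have hA0 : 0 < μ A := lt_of_lt_of_le (by simp [ENNReal.ofReal_pos]) hA
  -- the κ-concavity step
  set l : ℝ := (2+r)/3 with hl_def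
  have hl : l ∈ Set.Ioo (0:ℝ) 1 := by
    constructor
    · rw [hl_def]; positivity
    · rw [hl_def]; linarith
  have h1l : 1 - l = (1-r)/3 := by rw [hl_def]; ring
  have key : ∀ δ : ℝ, 0 < δ →
      ENNReal.ofReal (((1-r)/3) ^ (1/κ) * 2⁻¹) ≤ μ {z | r*h - δ*‖ξ‖ ≤ ⟪ξ, z⟫} := by
    intro δ hδ
    set B : Set (EuclideanSpace ℝ (Fin n)) := Metric.closedBall y δ with hB_def
    have hBc : IsCompact B := isCompact_closedBall y δ
    have hB0 : 0 < μ B := by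
      refine lt_of_lt_of_le (hpos (Metric.ball y δ) Metric.isOpen_ball
        ⟨y, Metric.mem_ball_self hδ, hyK⟩) (measure_mono Metric.ball_subset_closedBall)
    have hcon := hconc A B hAc hBc hA0 hB0 l hl
    have hsub : (1 - l) • A + l • B ⊆ {z | r*h - δ*‖ξ‖ ≤ ⟪ξ, z⟫} := by
      rintro z ⟨a', ha', b', hb', rfl⟩
      obtain ⟨a, ha, rfl⟩ := ha'
      obtain ⟨b, hb, rfl⟩ := hb'
      simp only [mem_setOf_eq, inner_add_right, real_inner_smul_right]
      have haA : -(2*h) ≤ ⟪ξ, a⟫ := ha.2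
      have hbB : h - δ*‖ξ‖ ≤ ⟪ξ, b⟫ := by
        have h1 : ⟪ξ, b⟫ = ⟪ξ, y⟫ + ⟪ξ, b - y⟫ := by
          rw [inner_sub_right]; ring
        have h2 : |⟪ξ, b - y⟫| ≤ ‖ξ‖ * ‖b - y‖ := abs_real_inner_le_norm ξ (b - y)
        have h3 : ‖b - y‖ ≤ δ := by
          rw [← dist_eq_norm]; exact Metric.mem_closedBall.1 hb
        have h4 : -(‖ξ‖ * δ) ≤ ⟪ξ, b - y⟫ := by
          rw [abs_le] at h2
          nlinarith [norm_nonneg ξ]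
        rw [h1, ← hh_def]
        nlinarith
      have e1 : (0:ℝ) ≤ 1 - l := by linarith [hl.2]
      have e2 := mul_le_mul_of_nonneg_left haA e1
      have e3 := mul_le_mul_of_nonneg_left hbB hl.1.le
      have e4 : (1-l)*(-(2*h)) + l*(h - δ*‖ξ‖) = r*h - l*(δ*‖ξ‖) := by
        rw [hl_def]; ring
      have e5 : r*h - δ*‖ξ‖ ≤ r*h - l*(δ*‖ξ‖) := by
        have e6 : l*(δ*‖ξ‖) ≤ 1*(δ*‖ξ‖) :=
          mul_le_mul_of_nonneg_right hl.2.le (by positivity)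
        linarith
      linarith
    have hlhs : ENNReal.ofReal (((1-r)/3) ^ (1/κ) * 2⁻¹) ≤
        (ENNReal.ofReal (1 - l) * (μ A) ^ κ + ENNReal.ofReal l * (μ B) ^ κ) ^ (1/κ) := by
      have h1 : ENNReal.ofReal (1-l) * (ENNReal.ofReal 2⁻¹) ^ κ ≤
          ENNReal.ofReal (1 - l) * (μ A) ^ κ + ENNReal.ofReal l * (μ B) ^ κ :=
        le_add_right (mul_le_mul_right (ENNReal.rpow_le_rpow hA hκ.le) _)
      calc ENNReal.ofReal (((1-r)/3) ^ (1/κ) * 2⁻¹)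
          = (ENNReal.ofReal (1-l) * (ENNReal.ofReal 2⁻¹) ^ κ) ^ (1/κ) := by
            rw [ENNReal.mul_rpow_of_nonneg _ _ (by positivity : (0:ℝ) ≤ 1/κ)]
            rw [← ENNReal.rpow_mul, mul_one_div_cancel hκ.ne', ENNReal.rpow_one]
            rw [ENNReal.ofReal_mul (Real.rpow_nonneg (by linarith : (0:ℝ) ≤ (1-r)/3) _)]
            rw [← h1l, ← ENNReal.ofReal_rpow_of_pos (by linarith [hl.2] : (0:ℝ) < 1 - l)]
      _ ≤ _ := ENNReal.rpow_le_rpow h1 (by positivity)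
    exact le_trans hlhs (le_trans hcon (measure_mono hsub))
  -- take δ → 0 along 1/(k+1)
  have hiInter : {z : EuclideanSpace ℝ (Fin n) | r*h ≤ ⟪ξ, z⟫} =
      ⋂ k : ℕ, {z | r*h - (1/(k+1))*‖ξ‖ ≤ ⟪ξ, z⟫} := by
    ext z
    simp only [mem_setOf_eq, mem_iInter]
    constructor
    · intro hz k
      have : (0:ℝ) < 1/((k:ℝ)+1) := by positivity
      nlinarith
    · intro hz
      refine le_of_forall_pos_le_add fun ε' hε' => ?_
      obtain ⟨k, hk⟩ := exists_nat_gt (‖ξ‖ / ε')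
      have h1 := hz k
      have hk1 : ‖ξ‖ / ε' < (k:ℝ) + 1 := by linarith
      have h2 : (1/((k:ℝ)+1)) * ‖ξ‖ < ε' := by
        rw [div_mul_eq_mul_div, one_mul, div_lt_iff₀ (by positivity)]
        rw [div_lt_iff₀ hε'] at hk1
        nlinarith
      linarith
  have hmono : ∀ i j : ℕ, i ≤ j →
      {z : EuclideanSpace ℝ (Fin n) | r*h - (1/(j+1))*‖ξ‖ ≤ ⟪ξ, z⟫} ⊆
      {z : EuclideanSpace ℝ (Fin n) | r*h - (1/(i+1))*‖ξ‖ ≤ ⟪ξ, z⟫} := by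
    intro i j hij z hz
    simp only [mem_setOf_eq] at hz ⊢
    have hij' : ((i:ℝ)+1) ≤ ((j:ℝ)+1) := by
      have := (Nat.cast_le (α := ℝ)).2 hij
      linarith
    have h1 : (1:ℝ)/((j:ℝ)+1) ≤ 1/((i:ℝ)+1) :=
      one_div_le_one_div_of_le (by positivity) hij'
    have h2 : (1:ℝ)/((j:ℝ)+1)*‖ξ‖ ≤ (1/((i:ℝ)+1))*‖ξ‖ := by
      apply mul_le_mul_of_nonneg_right h1 (norm_nonneg ξ)
    linarith
  have hfinal : ENNReal.ofReal (((1-r)/3) ^ (1/κ) * 2⁻¹) ≤ μ {z | r*h ≤ ⟪ξ, z⟫} := by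
    rw [hiInter]
    have hmeas : ∀ k : ℕ, MeasurableSet {z : EuclideanSpace ℝ (Fin n) |
        r*h - (1/(k+1))*‖ξ‖ ≤ ⟪ξ, z⟫} :=
      fun k => (isClosed_le continuous_const htc).measurableSet
    rw [Directed.measure_iInter (fun k => (hmeas k).nullMeasurableSet)
      (fun i j => ⟨max i j, hmono i (max i j) (le_max_left i j),
        hmono j (max i j) (le_max_right i j)⟩) ⟨0, measure_ne_top μ _⟩]
    exact le_iInf fun k => key (1/(k+1)) (by positivity)
  refine le_trans hfinal (measure_mono fun z hz => ?_)
  simp only [mem_setOf_eq] at hz ⊢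
  linarith

lemma logLaplace_zero {n : ℕ} {μ : Measure (EuclideanSpace ℝ (Fin n))}
    [IsProbabilityMeasure μ] : logLaplace μ 0 = 0 := by
  unfold logLaplace
  have : ∀ z : EuclideanSpace ℝ (Fin n), ENNReal.ofReal (Real.exp ⟪(0 : EuclideanSpace ℝ (Fin n)), z⟫) = 1 := by
    intro z
    rw [inner_zero_left, Real.exp_zero, ENNReal.ofReal_one]
  simp only [this, lintegral_one, measure_univ, ENNReal.log_one]

lemma cramer_nonneg {n : ℕ} {μ : Measure (EuclideanSpace ℝ (Fin n))}
    [IsProbabilityMeasure μ] (x : EuclideanSpace ℝ (Fin n)) : 0 ≤ cramer μ x := by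
  have h0 : ((⟪x, (0 : EuclideanSpace ℝ (Fin n))⟫ : ℝ) : EReal) - logLaplace μ 0 = 0 := by
    rw [logLaplace_zero, inner_zero_right]
    simp
  calc (0 : EReal) = ((⟪x, (0 : EuclideanSpace ℝ (Fin n))⟫ : ℝ) : EReal) - logLaplace μ 0 := h0.symm
  _ ≤ cramer μ x := le_iSup (fun ξ => ((⟪x, ξ⟫ : ℝ) : EReal) - logLaplace μ ξ) 0

lemma chernoff {n : ℕ} {μ : Measure (EuclideanSpace ℝ (Fin n))}
    {ξ x : EuclideanSpace ℝ (Fin n)} {ε : ℝ} (hε : 0 < ε)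
    (hH : ENNReal.ofReal ε ≤ μ {z | ⟪ξ, x⟫ ≤ ⟪ξ, z⟫}) :
    ((⟪x, ξ⟫ : ℝ) : EReal) - logLaplace μ ξ ≤ ((- Real.log ε : ℝ) : EReal) := by
  have htc : Continuous fun z : EuclideanSpace ℝ (Fin n) => ⟪ξ, z⟫ :=
    continuous_const.inner continuous_id
  set H : Set (EuclideanSpace ℝ (Fin n)) := {z | ⟪ξ, x⟫ ≤ ⟪ξ, z⟫} with hH_def
  have hHm : MeasurableSet H := (isClosed_le continuous_const htc).measurableSet
  have hlow : ENNReal.ofReal (Real.exp ⟪ξ, x⟫) * μ H ≤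
      ∫⁻ z, ENNReal.ofReal (Real.exp ⟪ξ, z⟫) ∂μ := by
    calc ENNReal.ofReal (Real.exp ⟪ξ, x⟫) * μ H
        = ∫⁻ _ in H, ENNReal.ofReal (Real.exp ⟪ξ, x⟫) ∂μ := (setLIntegral_const _ _).symm
    _ ≤ ∫⁻ z in H, ENNReal.ofReal (Real.exp ⟪ξ, z⟫) ∂μ := by
        refine setLIntegral_mono (ENNReal.measurable_ofReal.comp (Real.continuous_exp.comp htc).measurable) ?_
        intro z hz
        exact ENNReal.ofReal_le_ofReal (Real.exp_le_exp.2 hz)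
    _ ≤ ∫⁻ z, ENNReal.ofReal (Real.exp ⟪ξ, z⟫) ∂μ := setLIntegral_le_lintegral _ _
  have hlog : ((⟪ξ, x⟫ + Real.log ε : ℝ) : EReal) ≤ logLaplace μ ξ := by
    unfold logLaplace
    have h1 : ENNReal.ofReal (Real.exp ⟪ξ, x⟫) * ENNReal.ofReal ε ≤
        ∫⁻ z, ENNReal.ofReal (Real.exp ⟪ξ, z⟫) ∂μ :=
      le_trans (mul_le_mul_right hH _) hlow
    have h2 := ENNReal.log_monotone h1
    rw [ENNReal.log_mul_add, ENNReal.log_ofReal_of_pos (Real.exp_pos _),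
      ENNReal.log_ofReal_of_pos hε, Real.log_exp] at h2
    calc ((⟪ξ, x⟫ + Real.log ε : ℝ) : EReal) = (⟪ξ, x⟫ : ℝ) + (Real.log ε : ℝ) := by
          rw [EReal.coe_add]
    _ ≤ _ := h2
  calc ((⟪x, ξ⟫ : ℝ) : EReal) - logLaplace μ ξ
      ≤ ((⟪x, ξ⟫ : ℝ) : EReal) - ((⟪ξ, x⟫ + Real.log ε : ℝ) : EReal) :=
        EReal.sub_le_sub (le_refl _) hlog
  _ = ((⟪x, ξ⟫ - (⟪ξ, x⟫ + Real.log ε) : ℝ) : EReal) := by rw [EReal.coe_sub]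
  _ = ((- Real.log ε : ℝ) : EReal) := by
      rw [real_inner_comm x ξ]
      norm_num

lemma ereal_abs_le {b : EReal} {m : ℝ} (h0 : 0 ≤ b) (hm : b ≤ (m : EReal)) :
    b.abs ≤ ENNReal.ofReal m := by
  have hbt : b ≠ ⊤ := (hm.trans_lt (EReal.coe_lt_top m)).ne
  have hbb : b ≠ ⊥ := fun h => by rw [h] at h0; exact (EReal.bot_lt_zero).not_ge h0
  rw [← EReal.coe_toReal hbt hbb, EReal.abs_def]
  apply ENNReal.ofReal_le_ofReal
  have h0' : (0:ℝ) ≤ b.toReal := by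
    have := EReal.toReal_le_toReal h0 (by simp) hbt
    simpa using this
  rw [abs_of_nonneg h0']
  have := EReal.toReal_le_toReal hm hbb (EReal.coe_ne_top m)
  simpa using this

lemma cramer_bound {n : ℕ} {K : Set (EuclideanSpace ℝ (Fin n))} {κ : ℝ}
    {μ : Measure (EuclideanSpace ℝ (Fin n))}
    (hKc : IsCompact K) (h0K : 0 ∈ interior K)
    (hprob : IsProbabilityMeasure μ) (hconc : KConcave κ μ) (hκ : 0 < κ) (hκ1 : κ ≤ 1)
    (hsupp : μ Kᶜ = 0)
    (hpos : ∀ U, IsOpen U → (U ∩ K).Nonempty → 0 < μ U)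
    (hcent : ∀ ξ : EuclideanSpace ℝ (Fin n), ∫ z, ⟪z, ξ⟫ ∂μ = 0)
    {x : EuclideanSpace ℝ (Fin n)} (hx : x ∈ interior K) :
    (cramer μ x).abs ≤ ENNReal.ofReal ((1/κ) * (5 + Real.log (1/(1 - gauge K x)))) := by
  set r : ℝ := gauge K x with hr_def
  have hr0 : 0 ≤ r := gauge_nonneg x
  have hr1 : r < 1 := interior_subset_gauge_lt_one K hx
  set ε : ℝ := ((1 - r)/3) ^ (1/κ) * 2⁻¹ with hε_def
  have hεpos : 0 < ε := by
    apply mul_pos _ (by norm_num)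
    exact Real.rpow_pos_of_pos (by linarith) _
  have hlogε : - Real.log ε = (1/κ) * Real.log (3/(1-r)) + Real.log 2 := by
    rw [hε_def, Real.log_mul (ne_of_gt (Real.rpow_pos_of_pos (by linarith) _)) (by norm_num),
      Real.log_rpow (by linarith)]
    have h1 : Real.log ((1-r)/3) = - Real.log (3/(1-r)) := by
      rw [← Real.log_inv]
      congr 1
      rw [inv_div]
    have h2 : Real.log 2⁻¹ = - Real.log 2 := Real.log_inv 2
    rw [h1, h2]
    ring
  have hM : - Real.log ε ≤ (1/κ) * (5 + Real.log (1/(1-r))) := by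
    rw [hlogε]
    have hlog3 : Real.log (3/(1-r)) = Real.log 3 + Real.log (1/(1-r)) := by
      rw [div_eq_mul_one_div (3:ℝ) (1-r), Real.log_mul (by norm_num) (one_div_ne_zero (ne_of_gt (by linarith : (0:ℝ) < 1-r)))]
    rw [hlog3]
    have h1 : Real.log 3 ≤ 2 := by
      nlinarith [Real.log_le_sub_one_of_pos (by norm_num : (0:ℝ) < 3)]
    have h2 : Real.log 2 ≤ 1 := by
      nlinarith [Real.log_le_sub_one_of_pos (by norm_num : (0:ℝ) < 2)]
    have h3 : (0:ℝ) ≤ Real.log 2 := Real.log_nonneg (by norm_num)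
    have h6 : Real.log 2 = (1/κ)*(κ*Real.log 2) := by field_simp
    have h7 : Real.log 3 + κ*Real.log 2 ≤ 5 := by nlinarith
    calc (1/κ) * (Real.log 3 + Real.log (1/(1-r))) + Real.log 2
        = (1/κ) * (Real.log 3 + κ*Real.log 2 + Real.log (1/(1-r))) := by
          rw [h6]; field_simp; ring
    _ ≤ (1/κ) * (5 + Real.log (1/(1-r))) := by
        apply mul_le_mul_of_nonneg_left _ (by positivity)
        linarith
  have hub : cramer μ x ≤ ((- Real.log ε : ℝ) : EReal) := by
    apply iSup_le
    intro ξ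
    by_cases hξ : ξ = 0
    · subst hξ
      rw [logLaplace_zero, inner_zero_right]
      have h0 : ((0:ℝ) : EReal) - 0 = (0 : EReal) := by simp
      rw [h0]
      have : (0:ℝ) ≤ - Real.log ε := by
        have hε1 : ε ≤ 1 := by
          rw [hε_def]
          have h1 : ((1 - r)/3 : ℝ) ≤ 1 := by linarith
          have h2 : ((1 - r)/3 : ℝ) ^ (1/κ) ≤ 1 :=
            Real.rpow_le_one (by linarith) h1 (by positivity)
          nlinarith [Real.rpow_pos_of_pos (show (0:ℝ) < (1-r)/3 by linarith) (1/κ)]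
        have := Real.log_nonpos hεpos.le hε1
        linarith
      exact_mod_cast this
    · exact chernoff hεpos (halfspace_meas hKc h0K hprob hconc hκ hsupp hpos hξ (hcent ξ) hx)
  have h0c : (0 : EReal) ≤ cramer μ x := by
    have h0 : ((⟪x, (0 : EuclideanSpace ℝ (Fin n))⟫ : ℝ) : EReal) - logLaplace μ 0 = 0 := by
      rw [logLaplace_zero, inner_zero_right]; simp
    calc (0 : EReal) = _ := h0.symm
    _ ≤ cramer μ x := le_iSup (fun ξ => ((⟪x, ξ⟫ : ℝ) : EReal) - logLaplace μ ξ) 0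
  exact ereal_abs_le h0c (le_trans hub (by exact_mod_cast hM))

lemma tail_integrable {T : ℝ} (hT : 0 < T) :
    MeasureTheory.IntegrableOn (fun t => Real.exp (-Real.sqrt t)) (Ioi T) := by
  have hint0 : IntegrableOn (fun t : ℝ => 27 * t ^ (-(3:ℝ)/2)) (Ioi T) :=
    (integrableOn_Ioi_rpow_of_lt (by norm_num) hT).const_mul 27
  refine Integrable.mono' hint0 ?_ ?_
  · exact ((Real.continuous_exp.comp (continuous_sqrt.neg)).aestronglyMeasurable)
  · refine (ae_restrict_iff' measurableSet_Ioi).2 (Filter.Eventually.of_forall fun t ht => ?_)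
    have ht0 : 0 < t := lt_of_lt_of_le hT (le_of_lt ht)
    have hst : 0 < Real.sqrt t := Real.sqrt_pos.2 ht0
    rw [Real.norm_eq_abs, abs_of_pos (Real.exp_pos _)]
    -- e^{-√t} ≤ 27 * t^{-3/2}
    have hcube : (Real.sqrt t)^3 / 27 ≤ Real.exp (Real.sqrt t) := by
      set s := Real.sqrt t
      have h1 : 1 + s/3 ≤ Real.exp (s/3) := by
        have := Real.add_one_le_exp (s/3)
        linarith
      have h2 : (s/3)^3 ≤ (1 + s/3)^3 := by
        apply pow_le_pow_left₀ (by positivity)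
        linarith
      have h3 : (1 + s/3)^3 ≤ (Real.exp (s/3))^3 := by
        apply pow_le_pow_left₀ (by positivity) h1
      have h4 : (Real.exp (s/3))^3 = Real.exp s := by
        rw [← Real.exp_nat_mul]
        congr 1
        field_simp
        norm_num
      calc s^3/27 = (s/3)^3 := by ring
      _ ≤ (1 + s/3)^3 := h2
      _ ≤ Real.exp s := h4 ▸ h3
    have hrpow : t ^ (-(3:ℝ)/2) = ((Real.sqrt t)^3)⁻¹ := by
      rw [Real.sqrt_eq_rpow, ← Real.rpow_natCast (t ^ ((1:ℝ)/2)) 3, ← Real.rpow_mul ht0.le]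
      rw [← Real.rpow_neg ht0.le]
      norm_num
    rw [hrpow]
    have hc3 : 0 < (Real.sqrt t)^3 := by positivity
    rw [Real.exp_neg]
    have hmul : (Real.sqrt t)^3 / 27 ≤ Real.exp (Real.sqrt t) := hcube
    have he : 0 < Real.exp (Real.sqrt t) := Real.exp_pos _
    rw [inv_le_comm₀ he (by positivity : (0:ℝ) < 27 * ((Real.sqrt t)^3)⁻¹)]
    calc (27 * ((Real.sqrt t)^3)⁻¹)⁻¹ = (Real.sqrt t)^3/27 := by
          rw [mul_inv, inv_inv]
          ring
    _ ≤ Real.exp (Real.sqrt t) := hcube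

lemma tail_integral {T : ℝ} (hT : 0 < T) :
    ∫ t in Ioi T, Real.exp (-Real.sqrt t) = 2*(Real.sqrt T + 1)*Real.exp (-Real.sqrt T) := by
  have hderiv : ∀ t ∈ Ici T, HasDerivAt (fun u => -2*(Real.sqrt u + 1)*Real.exp (-Real.sqrt u))
      (Real.exp (-Real.sqrt t)) t := by
    intro t ht
    have ht0 : 0 < t := lt_of_lt_of_le hT ht
    have hst : 0 < Real.sqrt t := Real.sqrt_pos.2 ht0
    have hs := Real.hasDerivAt_sqrt (ne_of_gt ht0)
    have g1 : HasDerivAt (fun u => Real.exp (-Real.sqrt u))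
        (Real.exp (-Real.sqrt t) * (-(1/(2*Real.sqrt t)))) t := hs.neg.exp
    have g2 : HasDerivAt (fun u => -2*(Real.sqrt u + 1)) (-2*(1/(2*Real.sqrt t))) t :=
      ((hs.add_const 1).const_mul (-2))
    have g3 : HasDerivAt (fun u => -2*(Real.sqrt u + 1)*Real.exp (-Real.sqrt u)) _ t := g2.mul g1
    convert g3 using 1
    field_simp
    ring
  have hint := tail_integrable hT
  have htend : Tendsto (fun u => -2*(Real.sqrt u + 1)*Real.exp (-Real.sqrt u)) atTop (𝓝 0) := by
    have hsq : Tendsto Real.sqrt atTop atTop := by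
      apply tendsto_atTop_atTop.2
      intro b
      exact ⟨max 0 (b^2), fun a ha => by
        have h1 : b^2 ≤ a := le_trans (le_max_right _ _) ha
        have h2 : 0 ≤ a := le_trans (le_max_left _ _) ha
        calc b ≤ |b| := le_abs_self b
        _ = Real.sqrt (b^2) := (Real.sqrt_sq_eq_abs b).symm
        _ ≤ Real.sqrt a := Real.sqrt_le_sqrt h1⟩
    have hG : Tendsto (fun s : ℝ => -2*(s + 1)*Real.exp (-s)) atTop (𝓝 0) := by
      have h1 := Real.tendsto_pow_mul_exp_neg_atTop_nhds_zero 1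
      have h2 := Real.tendsto_exp_neg_atTop_nhds_zero
      have h3 : Tendsto (fun s : ℝ => -2*(s*Real.exp (-s)) + (-2)*Real.exp (-s)) atTop
          (𝓝 (-2*0 + (-2)*0)) := ((h1.congr (fun s => by rw [pow_one])).const_mul (-2)).add
        (h2.const_mul (-2))
      simpa using h3.congr fun s => by ring
    exact (hG.comp hsq).congr fun u => rfl
  have := integral_Ioi_of_hasDerivAt_of_tendsto' hderiv hint htend
  rw [this]
  ring

lemma gauge_integral_bound {n : ℕ} (hn : 2 ≤ n) {K : Set (EuclideanSpace ℝ (Fin n))}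
    (hKc : IsCompact K) (hKconv : Convex ℝ K) (h0K : 0 ∈ interior K)
    (hvol : volume K = 1) :
    ∫⁻ x in interior K, ENNReal.ofReal ((Real.log (1/(1 - gauge K x)))^2) ∂volume
      ≤ ENNReal.ofReal (9 * (Real.log n)^2) := by
  have h0K' : (0 : EuclideanSpace ℝ (Fin n)) ∈ K := interior_subset h0K
  have hgc : Continuous (gauge K) := continuous_gauge hKconv (mem_interior_iff_mem_nhds.1 h0K)
  have hKm : MeasurableSet K := hKc.isClosed.measurableSet
  set f : EuclideanSpace ℝ (Fin n) → ℝ := fun x => (Real.log (1/(1 - gauge K x)))^2 with hf_def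
  have hfm : Measurable f := by
    apply Measurable.pow_const
    exact Real.measurable_log.comp (measurable_const.div (measurable_const.sub hgc.measurable))
  set ν := volume.restrict (interior K) with hν_def
  have hlayer := lintegral_eq_lintegral_meas_lt ν
    (Filter.Eventually.of_forall fun x => sq_nonneg (Real.log (1/(1 - gauge K x))))
    hfm.aemeasurable
  rw [hlayer]
  -- measure bounds
  have hb1 : ∀ t : ℝ, ν {x | t < f x} ≤ 1 := by
    intro t
    calc ν {x | t < f x} ≤ ν univ := measure_mono (subset_univ _)
    _ = volume (interior K) := by rw [hν_def, Measure.restrict_apply_univ]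
    _ ≤ volume K := measure_mono interior_subset
    _ = 1 := hvol
  have hb2 : ∀ t : ℝ, 0 < t →
      ν {x | t < f x} ≤ ENNReal.ofReal (n * Real.exp (-Real.sqrt t)) := by
    intro t ht
    set v : ℝ := Real.exp (-Real.sqrt t) with hv_def
    have hv0 : 0 < v := Real.exp_pos _
    have hv1 : v ≤ 1 := by
      rw [hv_def]
      calc Real.exp (-Real.sqrt t) ≤ Real.exp 0 :=
        Real.exp_le_exp.2 (neg_nonpos.2 (Real.sqrt_nonneg t))
      _ = 1 := Real.exp_zero
    set s : ℝ := 1 - v with hs_def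
    have hs0 : 0 ≤ s := by linarith
    have hsub : {x | t < f x} ∩ interior K ⊆ K \ {x | gauge K x ≤ s} := by
      rintro x ⟨hxt, hxK⟩
      have hg0 : 0 ≤ gauge K x := gauge_nonneg x
      have hg1 : gauge K x < 1 := interior_subset_gauge_lt_one K hxK
      have h1g : 0 < 1 - gauge K x := by linarith
      have hL0 : 0 ≤ Real.log (1/(1 - gauge K x)) := by
        apply Real.log_nonneg
        rw [le_div_iff₀ h1g]
        linarith
      have hsq : Real.sqrt t < Real.log (1/(1 - gauge K x)) := by
        have h2 : Real.sqrt t < Real.sqrt ((Real.log (1/(1 - gauge K x)))^2) :=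
          Real.sqrt_lt_sqrt ht.le hxt
        rwa [Real.sqrt_sq hL0] at h2
      have hexp : Real.exp (Real.sqrt t) < 1/(1 - gauge K x) :=
        (Real.lt_log_iff_exp_lt (by positivity)).1 hsq
      have hgs : s < gauge K x := by
        have h3 : (1 - gauge K x) * Real.exp (Real.sqrt t) < 1 := by
          have h4 := mul_lt_mul_of_pos_left hexp h1g
          rwa [mul_one_div, div_self (ne_of_gt h1g)] at h4
        have h5 : 1 - gauge K x < v := by
          rw [hv_def, Real.exp_neg, ← one_div]
          rw [lt_div_iff₀ (Real.exp_pos _)]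
          exact h3
        rw [hs_def]
        linarith
      exact ⟨interior_subset hxK, by simpa using not_le.2 hgs⟩
    have hsmul : s • K ⊆ K ∩ {x | gauge K x ≤ s} := by
      rintro _ ⟨k, hk, rfl⟩
      constructor
      · have := hKconv hk h0K' hs0 (by linarith : (0:ℝ) ≤ 1 - s) (by ring)
        simpa using this
      · exact gauge_le_of_mem hs0 ⟨k, hk, rfl⟩
    have hmeasg : MeasurableSet {x : EuclideanSpace ℝ (Fin n) | gauge K x ≤ s} :=
      (isClosed_le hgc continuous_const).measurableSet
    have hsmulvol : ENNReal.ofReal (s^n) ≤ volume (K ∩ {x | gauge K x ≤ s}) := by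
      have h6 : volume (s • K) = ENNReal.ofReal (s^n) := by
        rw [Measure.addHaar_smul volume s K, hvol, mul_one, finrank_euclideanSpace_fin,
          abs_of_nonneg (pow_nonneg hs0 n)]
      rw [← h6]
      exact measure_mono hsmul
    calc ν {x | t < f x} = volume ({x | t < f x} ∩ interior K) := by
          rw [hν_def, Measure.restrict_apply (measurableSet_lt measurable_const hfm)]
    _ ≤ volume (K \ {x | gauge K x ≤ s}) := measure_mono hsub
    _ = volume (K \ (K ∩ {x | gauge K x ≤ s})) := by rw [diff_self_inter]
    _ = volume K - volume (K ∩ {x | gauge K x ≤ s}) :=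
        measure_diff inter_subset_left (hKm.inter hmeasg).nullMeasurableSet
          (ne_top_of_le_ne_top (by simp [hvol]) (measure_mono inter_subset_left))
    _ ≤ 1 - ENNReal.ofReal (s^n) := by
        apply tsub_le_tsub (le_of_eq hvol) hsmulvol
    _ = ENNReal.ofReal (1 - s^n) := by
        rw [← ENNReal.ofReal_one, ← ENNReal.ofReal_sub _ (by positivity)]
    _ ≤ ENNReal.ofReal (n * v) := by
        apply ENNReal.ofReal_le_ofReal
        have h7 : (1:ℝ) + n * (-v) ≤ (1 + (-v))^n := one_add_mul_le_pow (by linarith) n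
        have h8 : ((1:ℝ) + (-v))^n = s^n := by rw [hs_def]; ring_nf
        nlinarith [h7, h8]
  -- split the integral
  set T : ℝ := (Real.log n)^2 with hT_def
  have hlogn : Real.log 2 ≤ Real.log n := by
    apply Real.log_le_log (by norm_num)
    exact_mod_cast hn
  have hlog2 : (0.6931471803 : ℝ) < Real.log 2 := Real.log_two_gt_d9
  have hlognpos : 0 < Real.log n := by linarith
  have hT0 : 0 < T := by rw [hT_def]; positivity
  have hsplit : (Ioi (0:ℝ)) = Ioc 0 T ∪ Ioi T := (Ioc_union_Ioi_eq_Ioi hT0.le).symm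
  rw [hsplit, lintegral_union measurableSet_Ioi Ioc_disjoint_Ioi_same]
  have hpart1 : ∫⁻ t in Ioc (0:ℝ) T, ν {x | t < f x} ≤ ENNReal.ofReal T := by
    calc ∫⁻ t in Ioc (0:ℝ) T, ν {x | t < f x} ≤ ∫⁻ _ in Ioc (0:ℝ) T, 1 :=
      lintegral_mono fun t => hb1 t
    _ = volume (Ioc (0:ℝ) T) := by rw [setLIntegral_one]
    _ = ENNReal.ofReal T := by rw [Real.volume_Ioc, sub_zero]
  have hpart2 : ∫⁻ t in Ioi T, ν {x | t < f x} ≤ ENNReal.ofReal (2*(Real.log n + 1)) := by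
    have hint : IntegrableOn (fun t => (n:ℝ) * Real.exp (-Real.sqrt t)) (Ioi T) :=
      (tail_integrable hT0).const_mul _
    calc ∫⁻ t in Ioi T, ν {x | t < f x}
        ≤ ∫⁻ t in Ioi T, ENNReal.ofReal ((n:ℝ) * Real.exp (-Real.sqrt t)) := by
          apply setLIntegral_mono_ae (by fun_prop)
          exact Filter.Eventually.of_forall (fun t ht => hb2 t (lt_trans hT0 ht))
    _ = ENNReal.ofReal (∫ t in Ioi T, (n:ℝ) * Real.exp (-Real.sqrt t)) := by
          rw [ofReal_integral_eq_lintegral_ofReal hint]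
          exact (ae_restrict_iff' measurableSet_Ioi).2 (Filter.Eventually.of_forall
            (fun t _ => by positivity))
    _ = ENNReal.ofReal ((n:ℝ) * (2*(Real.sqrt T + 1)*Real.exp (-Real.sqrt T))) := by
          rw [integral_const_mul, tail_integral hT0]
    _ = ENNReal.ofReal (2*(Real.log n + 1)) := by
          congr 1
          rw [hT_def, Real.sqrt_sq hlognpos.le, Real.exp_neg, Real.exp_log
            (by positivity : (0:ℝ) < n)]
          have hnne : (n:ℝ) ≠ 0 := by positivity
          field_simp
  calc (∫⁻ t in Ioc (0:ℝ) T, ν {x | t < f x}) + ∫⁻ t in Ioi T, ν {x | t < f x}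
      ≤ ENNReal.ofReal T + ENNReal.ofReal (2*(Real.log n + 1)) := add_le_add hpart1 hpart2
  _ = ENNReal.ofReal (T + 2*(Real.log n + 1)) := by
      rw [← ENNReal.ofReal_add (by positivity) (by positivity)]
  _ ≤ ENNReal.ofReal (9 * (Real.log n)^2) := by
      apply ENNReal.ofReal_le_ofReal
      rw [hT_def]
      set L := Real.log n
      have hL : (0.6931471803 : ℝ) ≤ L := by linarith
      nlinarith [mul_nonneg (sub_nonneg.2 hL) hlognpos.le]

end Auxiliary

section Main
open Set Filter Topology

/-- Moment bounds: there is an absolute constant `c > 0` such that for every centered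
`κ`-concave probability measure `μ` with `supp(μ) = K` a centered convex body of volume 1 in
`ℝⁿ`, `n ≥ 2`, one has `(E_μ[(Λ*_μ)²])^{1/2} ≤ (c ln n / κ) ‖f‖_∞^{1/2}`, and in particular
`E_μ(Λ*_μ) ≤ (c ln n / κ) ‖f‖_∞^{1/2}`. -/
theorem stmt15 :
    ∃ c : ℝ, 0 < c ∧
      ∀ (n : ℕ), 2 ≤ n →
      ∀ (K : Set (EuclideanSpace ℝ (Fin n))),
        IsCompact K → Convex ℝ K → (interior K).Nonempty →
        volume K = 1 → (∫ x in K, x) = 0 →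
      ∀ (κ : ℝ), κ ∈ Set.Ioc (0 : ℝ) (1 / n) →
      ∀ (f : EuclideanSpace ℝ (Fin n) → ℝ)
        (μ : Measure (EuclideanSpace ℝ (Fin n))), IsProbabilityMeasure μ →
        μ = volume.withDensity (fun x => ENNReal.ofReal (f x)) →
        KConcave κ μ →
        (∀ ξ : EuclideanSpace ℝ (Fin n), ∫ z, ⟪z, ξ⟫ ∂μ = 0) →
        μ Kᶜ = 0 →
        (∀ U : Set (EuclideanSpace ℝ (Fin n)), IsOpen U → (U ∩ K).Nonempty → 0 < μ U) →
        (∫⁻ x, (cramer μ x).abs ^ (2 : ℝ) ∂μ) ^ ((1 : ℝ) / 2)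
            ≤ ENNReal.ofReal (c * Real.log n / κ) * (eLpNorm f ⊤ volume) ^ ((1 : ℝ) / 2) ∧
          ∫⁻ x, (cramer μ x).abs ∂μ
            ≤ ENNReal.ofReal (c * Real.log n / κ) * (eLpNorm f ⊤ volume) ^ ((1 : ℝ) / 2) := by
  refine ⟨12, by norm_num, ?_⟩
  intro n hn K hKc hKconv hKint hvol hKcent κ hκmem f μ hprob hμeq hconc hcent hsupp hpos
  obtain ⟨hκ, hκn⟩ := hκmem
  have hn1 : (1:ℝ) ≤ n := by exact_mod_cast le_trans (by norm_num) hn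
  have hκ1 : κ ≤ 1 := le_trans hκn (by
    rw [div_le_one (by linarith : (0:ℝ) < n)]; linarith)
  have h0K : 0 ∈ interior K := zero_mem_interior_aux hKc hKconv hKint hKcent
  have hlogn : (0:ℝ) < Real.log n := by
    apply Real.log_pos
    exact_mod_cast lt_of_lt_of_le (by norm_num) hn
  have hcoef : (0:ℝ) < 12 * Real.log n / κ := by positivity
  set S : ℝ≥0∞ := eLpNorm f ⊤ volume with hS_def
  by_cases hStop : S = ⊤
  · have hRHS : ENNReal.ofReal (12 * Real.log (n:ℝ) / κ) * S ^ ((1:ℝ)/2) = ⊤ := by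
      rw [hStop, ENNReal.top_rpow_of_pos (by norm_num), ENNReal.mul_top
        (ne_of_gt (ENNReal.ofReal_pos.2 hcoef))]
    rw [hRHS]
    exact ⟨le_top, le_top⟩
  -- μ ≤ S • volume
  have haef : ∀ᵐ x ∂volume, ENNReal.ofReal (f x) ≤ S := by
    have h1 : ∀ᵐ x ∂volume, (‖f x‖₊ : ℝ≥0∞) ≤ S := by
      rw [hS_def, eLpNorm_exponent_top, eLpNormEssSup]
      exact ae_le_essSup
    filter_upwards [h1] with x hx
    calc ENNReal.ofReal (f x) ≤ ENNReal.ofReal |f x| :=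
          ENNReal.ofReal_le_ofReal (le_abs_self _)
    _ = (‖f x‖₊ : ℝ≥0∞) := (Real.enorm_eq_ofReal_abs _).symm
    _ ≤ S := hx
  have hμle : μ ≤ S • volume := by
    refine Measure.le_intro fun s hs _ => ?_
    rw [hμeq, withDensity_apply _ hs, Measure.smul_apply, smul_eq_mul]
    calc ∫⁻ x in s, ENNReal.ofReal (f x) ∂volume ≤ ∫⁻ _ in s, S ∂volume :=
      lintegral_mono_ae (ae_restrict_of_ae haef)
    _ = S * volume s := setLIntegral_const s S
  have hac : μ ≪ volume := by
    intro s hs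
    refine le_antisymm ?_ zero_le
    calc μ s ≤ μ (toMeasurable volume s) := measure_mono (subset_toMeasurable volume s)
    _ ≤ (S • volume) (toMeasurable volume s) := Measure.le_iff'.1 hμle _
    _ = 0 := by
        rw [Measure.smul_apply, measure_toMeasurable, hs, smul_eq_mul, mul_zero]
  -- a.e. membership in interior K
  have haeint : ∀ᵐ x ∂μ, x ∈ interior K := by
    rw [ae_iff]
    have h3 : {x | ¬ x ∈ interior K} = Kᶜ ∪ frontier K := by
      rw [hKc.isClosed.frontier_eq]
      ext x
      simp only [mem_setOf_eq, mem_union, mem_compl_iff, mem_diff]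
      constructor
      · intro hx
        by_cases hxK : x ∈ K
        · exact Or.inr ⟨hxK, hx⟩
        · exact Or.inl hxK
      · rintro (hx | ⟨_, hx⟩)
        · exact fun hi => hx (interior_subset hi)
        · exact hx
    rw [h3]
    have h4 : μ (frontier K) = 0 := hac (hKconv.addHaar_frontier volume)
    exact le_antisymm (le_trans (measure_union_le _ _) (by rw [hsupp, h4, add_zero])) zero_le
  -- the dominating function
  set B : EuclideanSpace ℝ (Fin n) → ℝ :=
    fun x => (1/κ) * (5 + Real.log (1/(1 - gauge K x))) with hB_def
  set G : EuclideanSpace ℝ (Fin n) → ℝ≥0∞ :=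
    (interior K).indicator (fun x => ENNReal.ofReal (B x)) with hG_def
  have hgc : Continuous (gauge K) := continuous_gauge hKconv (mem_interior_iff_mem_nhds.1 h0K)
  have hmL : Measurable (fun x : EuclideanSpace ℝ (Fin n) =>
      Real.log (1/(1 - gauge K x))) :=
    Real.measurable_log.comp (measurable_const.div (measurable_const.sub hgc.measurable))
  have hGm : Measurable G := by
    apply Measurable.indicator _ isOpen_interior.measurableSet
    apply ENNReal.measurable_ofReal.comp
    apply Measurable.const_mul
    exact hmL.const_add 5
  have haebound : ∀ᵐ x ∂μ, (cramer μ x).abs ≤ G x := by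
    filter_upwards [haeint] with x hx
    rw [hG_def, indicator_of_mem hx]
    exact cramer_bound hKc h0K hprob hconc hκ hκ1 hsupp hpos hcent hx
  -- bound on ∫⁻ G^2 dμ
  have hvolint : volume (interior K) ≤ 1 := le_trans (measure_mono interior_subset) (le_of_eq hvol)
  have hG2vol : ∫⁻ x, (G x) ^ (2:ℝ) ∂volume ≤
      ENNReal.ofReal ((12 * Real.log n / κ)^2) := by
    have hind : ∀ x, (G x) ^ (2:ℝ) =
        (interior K).indicator (fun x => (ENNReal.ofReal (B x)) ^ (2:ℝ)) x := by
      intro x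
      by_cases hx : x ∈ interior K
      · rw [hG_def, indicator_of_mem hx, indicator_of_mem hx]
      · rw [hG_def, indicator_of_notMem hx, indicator_of_notMem hx,
          ENNReal.zero_rpow_of_pos (by norm_num)]
    calc ∫⁻ x, (G x) ^ (2:ℝ) ∂volume
        = ∫⁻ x in interior K, (ENNReal.ofReal (B x)) ^ (2:ℝ) ∂volume := by
          rw [funext hind, lintegral_indicator isOpen_interior.measurableSet]
    _ ≤ ∫⁻ x in interior K, (ENNReal.ofReal (50/κ^2) + ENNReal.ofReal (2/κ^2) *
          ENNReal.ofReal ((Real.log (1/(1 - gauge K x)))^2)) ∂volume := by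
        apply setLIntegral_mono_ae
          ((measurable_const.add (measurable_const.mul
            ((hmL.pow_const 2).ennreal_ofReal))).aemeasurable)
        refine Filter.Eventually.of_forall fun x hx => ?_
        have hg0 : 0 ≤ gauge K x := gauge_nonneg x
        have hg1 : gauge K x < 1 := interior_subset_gauge_lt_one K hx
        have h1g : 0 < 1 - gauge K x := by linarith
        have hL0 : 0 ≤ Real.log (1/(1 - gauge K x)) := by
          apply Real.log_nonneg
          rw [le_div_iff₀ h1g]; linarith
        have hB0 : 0 ≤ B x := by
          rw [hB_def]; positivity
        set L := Real.log (1/(1 - gauge K x))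
        have hBval : B x ^ 2 ≤ 50/κ^2 + (2/κ^2) * L^2 := by
          rw [hB_def]
          have h5 : ((1/κ) * (5 + L))^2 = (1/κ^2) * (5 + L)^2 := by ring
          have h6 : (5 + L)^2 ≤ 50 + 2*L^2 := by nlinarith [sq_nonneg (L - 5)]
          rw [h5]
          have h7 : (1/κ^2) * (5 + L)^2 ≤ (1/κ^2) * (50 + 2*L^2) :=
            mul_le_mul_of_nonneg_left h6 (by positivity)
          calc (1/κ^2) * (5 + L)^2 ≤ (1/κ^2) * (50 + 2*L^2) := h7
          _ = 50/κ^2 + (2/κ^2) * L^2 := by ring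
        calc (ENNReal.ofReal (B x)) ^ (2:ℝ) = ENNReal.ofReal (B x ^ 2) := by
              rw [ENNReal.ofReal_rpow_of_nonneg hB0 (by norm_num)]
              congr 1
              rw [← Real.rpow_natCast (B x) 2]
              norm_num
        _ ≤ ENNReal.ofReal (50/κ^2 + (2/κ^2) * L^2) := ENNReal.ofReal_le_ofReal hBval
        _ = ENNReal.ofReal (50/κ^2) + ENNReal.ofReal (2/κ^2) * ENNReal.ofReal (L^2) := by
              rw [ENNReal.ofReal_add (by positivity) (by positivity),
                ENNReal.ofReal_mul (by positivity)]
    _ = ENNReal.ofReal (50/κ^2) * volume (interior K) + ENNReal.ofReal (2/κ^2) *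
          ∫⁻ x in interior K, ENNReal.ofReal ((Real.log (1/(1 - gauge K x)))^2) ∂volume := by
        rw [lintegral_add_left measurable_const, setLIntegral_const,
          lintegral_const_mul _ ((hmL.pow_const 2).ennreal_ofReal)]
    _ ≤ ENNReal.ofReal (50/κ^2) * 1 + ENNReal.ofReal (2/κ^2) *
          ENNReal.ofReal (9 * (Real.log n)^2) := by
        apply add_le_add (mul_le_mul_right hvolint _)
          (mul_le_mul_right (gauge_integral_bound hn hKc hKconv h0K hvol) _)
    _ ≤ ENNReal.ofReal ((12 * Real.log n / κ)^2) := by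
        rw [mul_one, ← ENNReal.ofReal_mul (by positivity), ← ENNReal.ofReal_add (by positivity)
          (by positivity)]
        apply ENNReal.ofReal_le_ofReal
        have hL2 : (0.6931471803 : ℝ) < Real.log n := by
          have := Real.log_two_gt_d9
          have h2n : Real.log 2 ≤ Real.log n := by
            apply Real.log_le_log (by norm_num)
            exact_mod_cast hn
          linarith
        have hkey : 50 + 18*(Real.log n)^2 ≤ 144*(Real.log n)^2 := by
          nlinarith [mul_nonneg (sub_nonneg.2 hL2.le) (sub_nonneg.2 hL2.le),
            mul_nonneg (sub_nonneg.2 hL2.le) hlogn.le]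
        calc 50/κ^2 + 2/κ^2 * (9*(Real.log n)^2)
            = (50 + 18*(Real.log n)^2)/κ^2 := by ring
        _ ≤ (144*(Real.log n)^2)/κ^2 := by gcongr
        _ = (12 * Real.log n / κ)^2 := by
            field_simp
            ring
  -- ∫⁻ G^2 dμ ≤ S * ofReal((12 log n / κ)^2)
  have hG2μ : ∫⁻ x, (G x) ^ (2:ℝ) ∂μ ≤ S * ENNReal.ofReal ((12 * Real.log n / κ)^2) := by
    calc ∫⁻ x, (G x) ^ (2:ℝ) ∂μ ≤ ∫⁻ x, (G x) ^ (2:ℝ) ∂(S • volume) :=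
      lintegral_mono' hμle (le_refl _)
    _ = S * ∫⁻ x, (G x) ^ (2:ℝ) ∂volume := lintegral_smul_measure S _
    _ ≤ S * ENNReal.ofReal ((12 * Real.log n / κ)^2) := mul_le_mul_right hG2vol S
  have hRHSsq : (S * ENNReal.ofReal ((12 * Real.log n / κ)^2)) ^ ((1:ℝ)/2)
      = ENNReal.ofReal (12 * Real.log n / κ) * S ^ ((1:ℝ)/2) := by
    rw [ENNReal.mul_rpow_of_nonneg _ _ (by norm_num : (0:ℝ) ≤ 1/2)]
    rw [ENNReal.ofReal_rpow_of_nonneg (by positivity) (by norm_num : (0:ℝ) ≤ 1/2)]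
    have hc : ((12 * Real.log (n:ℝ) / κ)^2) ^ ((1:ℝ)/2) = 12 * Real.log n / κ := by
      rw [← Real.rpow_natCast (12 * Real.log (n:ℝ) / κ) 2, ← Real.rpow_mul (by positivity)]
      norm_num
    rw [hc, mul_comm]
  have hmain1 : ∫⁻ x, (cramer μ x).abs ^ (2:ℝ) ∂μ ≤ ∫⁻ x, (G x)^(2:ℝ) ∂μ :=
    lintegral_mono_ae (haebound.mono fun x hx => ENNReal.rpow_le_rpow hx (by norm_num))
  constructor
  · calc (∫⁻ x, (cramer μ x).abs ^ (2:ℝ) ∂μ) ^ ((1:ℝ)/2)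
        ≤ (S * ENNReal.ofReal ((12 * Real.log n / κ)^2)) ^ ((1:ℝ)/2) :=
        ENNReal.rpow_le_rpow (le_trans hmain1 hG2μ) (by norm_num)
    _ = _ := hRHSsq
  · have hholder : ∫⁻ x, G x ∂μ ≤ (∫⁻ x, (G x)^(2:ℝ) ∂μ) ^ ((1:ℝ)/2) := by
      have hpq : Real.HolderConjugate 2 2 := Real.HolderConjugate.two_two
      have h2 := ENNReal.lintegral_mul_le_Lp_mul_Lq μ hpq hGm.aemeasurable
        (aemeasurable_const : AEMeasurable (fun _ => (1:ℝ≥0∞)) μ)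
      simp only [mul_one, ENNReal.one_rpow, lintegral_const, measure_univ] at h2
      simpa using h2
    calc ∫⁻ x, (cramer μ x).abs ∂μ ≤ ∫⁻ x, G x ∂μ := lintegral_mono_ae haebound
    _ ≤ (∫⁻ x, (G x)^(2:ℝ) ∂μ) ^ ((1:ℝ)/2) := hholder
    _ ≤ (S * ENNReal.ofReal ((12 * Real.log n / κ)^2)) ^ ((1:ℝ)/2) :=
        ENNReal.rpow_le_rpow hG2μ (by norm_num)
    _ = _ := hRHSsq

end Main
end

section
/- Let μ be a probability measure on ℝⁿ, N > n, X₁,…,X_N i.i.d. with law μ, and K_N = conv{X₁,…,X_N}. Then for every t > 0, E_{μ^N}[μ(K_N)] ≤ μ(B_t(μ)) + N e^{−t}, where B_t(μ) = {x : Λ*_μ(x) ≤ t}. -/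
open MeasureTheory Real
open scoped RealInnerProductSpace ENNReal

section Aux

variable {n : ℕ}

local notation "E" => EuclideanSpace ℝ (Fin n)

/-- The sublevel set of the Cramér transform is closed. -/
lemma aux_closed_B (μ : Measure E) (t : ℝ) :
    IsClosed {x : E | cramer μ x ≤ (t : EReal)} := by
  have : {x : E | cramer μ x ≤ (t : EReal)} =
      ⋂ ξ : E, {x : E | ((⟪x, ξ⟫ : ℝ) : EReal) - logLaplace μ ξ ≤ (t : EReal)} := by
    ext x
    simp [cramer, iSup_le_iff, Set.mem_iInter]
  rw [this]
  refine isClosed_iInter fun ξ => ?_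
  obtain ⟨l, hl⟩ : ∃ l, logLaplace μ ξ = l := ⟨_, rfl⟩
  rw [hl]
  clear hl this
  induction l using EReal.rec with
  | bot =>
    have : {x : E | ((⟪x, ξ⟫ : ℝ) : EReal) - ⊥ ≤ (t : EReal)} = ∅ := by
      ext x
      simp only [Set.mem_setOf_eq, Set.mem_empty_iff_false, iff_false, not_le]
      rw [EReal.coe_sub_bot]
      exact EReal.coe_lt_top t
    rw [this]; exact isClosed_empty
  | top =>
    have : {x : E | ((⟪x, ξ⟫ : ℝ) : EReal) - ⊤ ≤ (t : EReal)} = Set.univ := by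
      ext x
      simp [EReal.sub_top]
    rw [this]; exact isClosed_univ
  | coe r =>
    have : {x : E | ((⟪x, ξ⟫ : ℝ) : EReal) - (r : EReal) ≤ (t : EReal)} =
        {x : E | ⟪x, ξ⟫ ≤ t + r} := by
      ext x
      rw [Set.mem_setOf_eq, ← EReal.coe_sub, EReal.coe_le_coe_iff, Set.mem_setOf_eq,
        sub_le_iff_le_add]
    rw [this]
    exact isClosed_le (Continuous.inner continuous_id continuous_const) continuous_const

/-- Markov/Chernoff bound: if `⟪x,ξ⟫ - Λ_μ(ξ) > t` then the half-space
`{z | ⟪ξ,x⟫ ≤ ⟪ξ,z⟫}` has measure at most `e^{-t}`. -/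
lemma aux_markov (μ : Measure E) [IsProbabilityMeasure μ] (t : ℝ) (ξ x : E)
    (h : (t : EReal) < ((⟪x, ξ⟫ : ℝ) : EReal) - logLaplace μ ξ) :
    μ {z : E | ⟪ξ, x⟫ ≤ ⟪ξ, z⟫} ≤ ENNReal.ofReal (Real.exp (-t)) := by
  set c : ℝ := ⟪x, ξ⟫ with hc
  set L : ℝ≥0∞ := ∫⁻ z, ENNReal.ofReal (Real.exp ⟪ξ, z⟫) ∂μ with hLdef
  have hLlog : logLaplace μ ξ = ENNReal.log L := rfl
  -- step 1 : L < ofReal (exp (c - t))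
  have hL : L < ENNReal.ofReal (Real.exp (c - t)) := by
    rw [hLlog] at h
    obtain ⟨l, hl⟩ : ∃ l, ENNReal.log L = l := ⟨_, rfl⟩
    rw [hl] at h
    induction l using EReal.rec with
    | bot =>
      have : L = 0 := ENNReal.log_eq_bot_iff.mp hl
      rw [this]
      exact ENNReal.ofReal_pos.mpr (Real.exp_pos _)
    | top =>
      rw [EReal.sub_top] at h
      exact absurd h (by simp)
    | coe r =>
      rw [← EReal.coe_sub, EReal.coe_lt_coe_iff] at h
      have hr : r < c - t := by linarith
      have : L = EReal.exp (r : EReal) := by rw [← hl, ENNReal.exp_log]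
      rw [this, EReal.exp_coe]
      exact ENNReal.ofReal_lt_ofReal_iff'.mpr ⟨Real.exp_lt_exp.mpr hr, Real.exp_pos _⟩
  -- step 2 : Markov inequality
  have hmeas : AEMeasurable (fun z : E => ENNReal.ofReal (Real.exp ⟪ξ, z⟫)) μ := by
    refine Continuous.aemeasurable ?_
    exact ENNReal.continuous_ofReal.comp
      (Real.continuous_exp.comp (Continuous.inner continuous_const continuous_id))
  have hmarkov : ENNReal.ofReal (Real.exp c) * μ {z : E | ⟪ξ, x⟫ ≤ ⟪ξ, z⟫} ≤ L := by
    have hsub : {z : E | ⟪ξ, x⟫ ≤ ⟪ξ, z⟫} ⊆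
        {z : E | ENNReal.ofReal (Real.exp c) ≤ ENNReal.ofReal (Real.exp ⟪ξ, z⟫)} := by
      intro z hz
      have : c ≤ ⟪ξ, z⟫ := by rw [hc, real_inner_comm]; exact hz
      exact ENNReal.ofReal_le_ofReal (Real.exp_le_exp.mpr this)
    calc ENNReal.ofReal (Real.exp c) * μ {z : E | ⟪ξ, x⟫ ≤ ⟪ξ, z⟫}
        ≤ ENNReal.ofReal (Real.exp c) *
            μ {z : E | ENNReal.ofReal (Real.exp c) ≤ ENNReal.ofReal (Real.exp ⟪ξ, z⟫)} :=
          mul_le_mul_right (measure_mono hsub) _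
      _ ≤ L := mul_meas_ge_le_lintegral₀ hmeas _
  -- combine
  have key : ENNReal.ofReal (Real.exp c) * μ {z : E | ⟪ξ, x⟫ ≤ ⟪ξ, z⟫} ≤
      ENNReal.ofReal (Real.exp c) * ENNReal.ofReal (Real.exp (-t)) := by
    refine hmarkov.trans ?_
    rw [← ENNReal.ofReal_mul (le_of_lt (Real.exp_pos _)), ← Real.exp_add]
    exact le_of_lt (by rwa [show c + -t = c - t by ring])
  have h0 : ENNReal.ofReal (Real.exp c) ≠ 0 := by
    simp [ENNReal.ofReal_eq_zero, not_le, Real.exp_pos]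
  have htop : ENNReal.ofReal (Real.exp c) ≠ ⊤ := ENNReal.ofReal_ne_top
  exact (ENNReal.mul_le_mul_iff_right h0 htop).mp key

end Aux

/-- Upper bound for the expected measure of the random polytope `K_N = conv{X₁,…,X_N}` of
`N` i.i.d. points with law `μ`: `E[μ(K_N)] ≤ μ(B_t(μ)) + N e^{−t}` where
`B_t(μ) = {Λ*_μ ≤ t}`. -/
theorem stmt17 (n N : ℕ) (hN : n < N)
    (μ : Measure (EuclideanSpace ℝ (Fin n))) [IsProbabilityMeasure μ]
    (t : ℝ) (ht : 0 < t) :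
    ∫⁻ X : Fin N → EuclideanSpace ℝ (Fin n),
        μ (convexHull ℝ (Set.range X)) ∂(Measure.pi fun _ => μ)
      ≤ μ {x | cramer μ x ≤ (t : EReal)} + N * ENNReal.ofReal (Real.exp (-t)) := by
  classical
  set E := EuclideanSpace ℝ (Fin n) with hE
  set P : Measure (Fin N → E) := Measure.pi fun _ => μ with hP
  have hN0 : 0 < N := lt_of_le_of_lt (Nat.zero_le n) hN
  have hne : (Finset.univ : Finset (Fin N)).Nonempty := by
    simpa [Finset.univ_nonempty_iff] using Fin.pos_iff_nonempty.mp hN0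
  set B : Set E := {x | cramer μ x ≤ (t : EReal)} with hB
  have hBmeas : MeasurableSet B := (aux_closed_B μ t).measurableSet
  -- the enlarged (closed) random set
  set C : Set ((Fin N → E) × E) :=
    {p | ∀ ξ : E, ∃ i : Fin N, ⟪ξ, p.2⟫ ≤ ⟪ξ, p.1 i⟫} with hCdef
  have hCclosed : IsClosed C := by
    have : C = ⋂ ξ : E, ⋃ i : Fin N,
        {p : (Fin N → E) × E | ⟪ξ, p.2⟫ ≤ ⟪ξ, p.1 i⟫} := by
      ext p; simp [hCdef, Set.mem_iInter, Set.mem_iUnion]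
    rw [this]
    refine isClosed_iInter fun ξ => isClosed_iUnion_of_finite fun i => ?_
    exact isClosed_le
      (Continuous.inner continuous_const continuous_snd)
      (Continuous.inner continuous_const ((continuous_apply i).comp continuous_fst))
  have hCmeas : MeasurableSet C := hCclosed.measurableSet
  -- the convex hull is contained in each slice of C
  have hhull : ∀ X : Fin N → E, convexHull ℝ (Set.range X) ⊆ {x : E | (X, x) ∈ C} := by
    intro X x hx ξ
    set M : ℝ := Finset.univ.sup' hne (fun i => ⟪ξ, X i⟫) with hM
    have hlin : IsLinearMap ℝ (fun y : E => ⟪ξ, y⟫) :=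
      ⟨fun a b => inner_add_right ξ a b, fun c a => real_inner_smul_right ξ a c⟩
    have hsubset : convexHull ℝ (Set.range X) ⊆ {y : E | ⟪ξ, y⟫ ≤ M} := by
      refine convexHull_min ?_ (convex_halfSpace_le hlin M)
      rintro y ⟨i, rfl⟩
      exact Finset.le_sup' (fun i => ⟪ξ, X i⟫) (Finset.mem_univ i)
    obtain ⟨i, _, hi⟩ := Finset.exists_mem_eq_sup' hne (fun i => ⟪ξ, X i⟫)
    exact ⟨i, (hsubset hx).trans (le_of_eq hi)⟩
  -- pointwise in x bound for the slice probability
  have hpoint : ∀ x : E, P ((fun X => (X, x)) ⁻¹' C) ≤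
      B.indicator (fun _ => (1 : ℝ≥0∞)) x +
        Bᶜ.indicator (fun _ => (N : ℝ≥0∞) * ENNReal.ofReal (Real.exp (-t))) x := by
    intro x
    by_cases hx : x ∈ B
    · rw [Set.indicator_of_mem hx, Set.indicator_of_notMem (by simpa using hx)]
      simpa using (prob_le_one (μ := P) (s := _)).trans (by simp)
    · rw [Set.indicator_of_notMem hx, Set.indicator_of_mem (by simpa using hx), zero_add]
      -- get a witness ξ
      have hx' : (t : EReal) < cramer μ x := not_le.mp hx
      obtain ⟨ξ, hξ⟩ : ∃ ξ : E, (t : EReal) < ((⟪x, ξ⟫ : ℝ) : EReal) - logLaplace μ ξ := by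
        by_contra hcon
        push_neg at hcon
        exact absurd (iSup_le hcon : cramer μ x ≤ (t : EReal)) (not_le.mpr hx')
      have hsub : (fun X => (X, x)) ⁻¹' C ⊆ ⋃ i : Fin N, {X : Fin N → E | ⟪ξ, x⟫ ≤ ⟪ξ, X i⟫} := by
        intro X hX
        obtain ⟨i, hi⟩ := hX ξ
        exact Set.mem_iUnion.mpr ⟨i, hi⟩
      have hmarg : ∀ i : Fin N, P {X : Fin N → E | ⟪ξ, x⟫ ≤ ⟪ξ, X i⟫} =
          μ {z : E | ⟪ξ, x⟫ ≤ ⟪ξ, z⟫} := by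
        intro i
        have hpre : {X : Fin N → E | ⟪ξ, x⟫ ≤ ⟪ξ, X i⟫} =
            Set.pi Set.univ (Function.update (fun _ : Fin N => (Set.univ : Set E)) i
              {z : E | ⟪ξ, x⟫ ≤ ⟪ξ, z⟫}) := by
          rw [← Set.eval_preimage]
          rfl
        rw [hpre, hP, Measure.pi_pi]
        rw [Finset.prod_eq_single i
          (fun j _ hji => by rw [Function.update_of_ne hji]; exact measure_univ)
          (fun h => absurd (Finset.mem_univ i) h)]
        rw [Function.update_self]
      calc P ((fun X => (X, x)) ⁻¹' C)
          ≤ P (⋃ i : Fin N, {X : Fin N → E | ⟪ξ, x⟫ ≤ ⟪ξ, X i⟫}) := measure_mono hsub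
        _ ≤ ∑ i : Fin N, P {X : Fin N → E | ⟪ξ, x⟫ ≤ ⟪ξ, X i⟫} :=
            measure_iUnion_fintype_le _ _
        _ = ∑ _i : Fin N, μ {z : E | ⟪ξ, x⟫ ≤ ⟪ξ, z⟫} := by
            exact Finset.sum_congr rfl fun i _ => hmarg i
        _ ≤ ∑ _i : Fin N, ENNReal.ofReal (Real.exp (-t)) :=
            Finset.sum_le_sum fun i _ => aux_markov μ t ξ x hξ
        _ = (N : ℝ≥0∞) * ENNReal.ofReal (Real.exp (-t)) := by
            simp [Finset.sum_const, mul_comm]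
  -- main chain
  calc ∫⁻ X : Fin N → E, μ (convexHull ℝ (Set.range X)) ∂P
      ≤ ∫⁻ X : Fin N → E, μ (Prod.mk X ⁻¹' C) ∂P :=
        lintegral_mono fun X => measure_mono (hhull X)
    _ = (P.prod μ) C := (Measure.prod_apply hCmeas).symm
    _ = ∫⁻ x, P ((fun X => (X, x)) ⁻¹' C) ∂μ := Measure.prod_apply_symm hCmeas
    _ ≤ ∫⁻ x, (B.indicator (fun _ => (1 : ℝ≥0∞)) x +
          Bᶜ.indicator (fun _ => (N : ℝ≥0∞) * ENNReal.ofReal (Real.exp (-t))) x) ∂μ :=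
        lintegral_mono hpoint
    _ = μ B + ((N : ℝ≥0∞) * ENNReal.ofReal (Real.exp (-t))) * μ Bᶜ := by
        rw [lintegral_add_left ((measurable_const.indicator hBmeas))]
        rw [lintegral_indicator_const hBmeas, lintegral_indicator_const hBmeas.compl]
        rw [one_mul]
    _ ≤ μ B + (N : ℝ≥0∞) * ENNReal.ofReal (Real.exp (-t)) := by
        refine add_le_add le_rfl ?_
        calc ((N : ℝ≥0∞) * ENNReal.ofReal (Real.exp (-t))) * μ Bᶜ
            ≤ ((N : ℝ≥0∞) * ENNReal.ofReal (Real.exp (-t))) * 1 :=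
              mul_le_mul_right prob_le_one _
          _ = (N : ℝ≥0∞) * ENNReal.ofReal (Real.exp (-t)) := mul_one _
end
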